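/- arXiv:1111.0784 — 6 statements merged into one kernel-verified Lean document; each statement's English description precedes it below -/
import Mathlib

section
/- A regular language L over a finite alphabet A is star-free if and only if there exists N in the natural numbers such that for all n > N and all words u, v, w in A*, the word u v^n w lies in L if and only if u v^(n+1) w lies in L. -/
/-- Star-free languages over an alphabet `A`: the closure of the finite
languages under concatenation, union, intersection, and complementation. -/
inductive StarFree {A : Type*} : Language A → Prop
  | finite (L : Language A) : L.Finite → StarFree L
  | concat (L₁ L₂ : Language A) : StarFree L₁ → StarFree L₂ → StarFree (L₁ * L₂)
  | union (L₁ L₂ : Language A) : StarFree L₁ → StarFree L₂ → StarFree (L₁ ⊔ L₂)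
  | inter (L₁ L₂ : Language A) : StarFree L₁ → StarFree L₂ → StarFree (L₁ ⊓ L₂)
  | compl (L : Language A) : StarFree L → StarFree Lᶜ

/-- `wpow v n` is the word `v` concatenated with itself `n` times. -/
def wpow {A : Type*} (v : List A) : ℕ → List A
  | 0 => []
  | n + 1 => v ++ wpow v n

namespace SFAux

variable {A : Type*}

lemma wpow_add (v : List A) (a b : ℕ) : wpow v (a + b) = wpow v a ++ wpow v b := by
  induction a with
  | zero => simp [wpow]
  | succ a ih => rw [Nat.succ_add]; simp [wpow, ih]

lemma wpow_nil (n : ℕ) : wpow ([] : List A) n = [] := by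
  induction n with
  | zero => rfl
  | succ n ih => simp [wpow, ih]

lemma length_wpow (v : List A) (n : ℕ) : (wpow v n).length = n * v.length := by
  induction n with
  | zero => simp [wpow]
  | succ n ih => simp [wpow, ih, Nat.succ_mul]; ring

@[simp] lemma mem_sup {L₁ L₂ : Language A} {w : List A} : w ∈ L₁ ⊔ L₂ ↔ w ∈ L₁ ∨ w ∈ L₂ := Iff.rfl
@[simp] lemma mem_inf {L₁ L₂ : Language A} {w : List A} : w ∈ L₁ ⊓ L₂ ↔ w ∈ L₁ ∧ w ∈ L₂ := Iff.rfl
@[simp] lemma mem_compl {L : Language A} {w : List A} : w ∈ Lᶜ ↔ ¬ (w ∈ L) := Iff.rfl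
@[simp] lemma mem_setOf_lang {P : List A → Prop} {w : List A} :
    w ∈ ({x | P x} : Language A) ↔ P w := Iff.rfl

lemma sf_congr {L₁ L₂ : Language A} (h : L₁ = L₂) (hs : StarFree L₁) : StarFree L₂ := h ▸ hs

lemma sf_empty : StarFree (⊥ : Language A) := StarFree.finite _ Set.finite_empty

lemma sf_univ : StarFree (⊤ : Language A) := by
  have := StarFree.compl _ (sf_empty (A := A))
  exact sf_congr (by ext w; simp) this

lemma sf_biUnion {ι : Type*} {S : Set ι} (hS : S.Finite) {F : ι → Language A}
    (h : ∀ i ∈ S, StarFree (F i)) : StarFree {w : List A | ∃ i ∈ S, w ∈ F i} := by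
  induction S, hS using Set.Finite.induction_on with
  | empty => exact sf_congr (by ext w; exact iff_of_false id (by rintro ⟨i, hi, -⟩; exact hi)) sf_empty
  | @insert a s _ _ ih =>
    apply sf_congr (L₁ := F a ⊔ {w : List A | ∃ i ∈ s, w ∈ F i})
    · ext w; show _ ∨ _ ↔ ∃ _, _
      simp only [Set.mem_setOf_eq, Set.mem_insert_iff]
      constructor
      · rintro (h1 | ⟨i, hi, h2⟩)
        exacts [⟨a, Or.inl rfl, h1⟩, ⟨i, Or.inr hi, h2⟩]
      · rintro ⟨i, (rfl | hi), h2⟩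
        exacts [Or.inl h2, Or.inr ⟨i, hi, h2⟩]
    · exact StarFree.union _ _ (h a (Set.mem_insert _ _))
        (ih fun i hi => h i (Set.mem_insert_of_mem _ hi))

/-- left derivative preserves star-freeness -/
lemma sf_deriv {L : Language A} (c : A) (h : StarFree L) :
    StarFree {w : List A | c :: w ∈ L} := by
  induction h with
  | finite L hL =>
    apply StarFree.finite
    have hsub : ((c :: ·) '' {w : List A | c :: w ∈ L}) ⊆ L := by
      rintro x ⟨w, hw, rfl⟩; exact hw
    have hfin : Set.Finite ((c :: ·) '' {w : List A | c :: w ∈ L}) := hL.subset hsub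
    have hinj : Function.Injective (fun w : List A => c :: w) := fun a b h => by
      simpa using h
    exact Set.Finite.of_finite_image hfin hinj.injOn
  | union L₁ L₂ h₁ h₂ ih₁ ih₂ =>
    exact sf_congr (by ext w; exact Iff.rfl) (StarFree.union _ _ ih₁ ih₂)
  | inter L₁ L₂ h₁ h₂ ih₁ ih₂ =>
    exact sf_congr (by ext w; exact Iff.rfl) (StarFree.inter _ _ ih₁ ih₂)
  | compl L h ih =>
    exact sf_congr (by ext w; exact Iff.rfl) (StarFree.compl _ ih)
  | concat L₁ L₂ h₁ h₂ ih₁ ih₂ =>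
    by_cases hnil : [] ∈ L₁
    · apply sf_congr (L₁ := (show Language A from {w : List A | c :: w ∈ L₁}) * L₂
        ⊔ {w : List A | c :: w ∈ L₂})
      · ext w
        simp only [mem_sup, mem_setOf_lang, Language.mem_mul]
        constructor
        · rintro (⟨a, ha, b, hb, rfl⟩ | hw)
          · exact ⟨c :: a, ha, b, hb, rfl⟩
          · exact ⟨[], hnil, c :: w, hw, rfl⟩
        · rintro ⟨a, ha, b, hb, hab⟩
          rcases a with _ | ⟨a0, a⟩
          · right; rw [List.nil_append] at hab; rwa [hab] at hb
          · rw [List.cons_append] at hab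
            obtain ⟨rfl, rfl⟩ : a0 = c ∧ a ++ b = w := by
              exact ⟨(List.cons.injEq .. ▸ hab).1, (List.cons.injEq .. ▸ hab).2⟩
            left; exact ⟨a, ha, b, hb, rfl⟩
      · exact StarFree.union _ _ (StarFree.concat _ _ ih₁ h₂) ih₂
    · apply sf_congr (L₁ := (show Language A from {w : List A | c :: w ∈ L₁}) * L₂)
      · ext w
        simp only [mem_setOf_lang, Language.mem_mul]
        constructor
        · rintro ⟨a, ha, b, hb, rfl⟩
          exact ⟨c :: a, ha, b, hb, rfl⟩
        · rintro ⟨a, ha, b, hb, hab⟩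
          rcases a with _ | ⟨a0, a⟩
          · exact absurd ha hnil
          · rw [List.cons_append] at hab
            obtain ⟨rfl, rfl⟩ : a0 = c ∧ a ++ b = w :=
              ⟨(List.cons.injEq .. ▸ hab).1, (List.cons.injEq .. ▸ hab).2⟩
            exact ⟨a, ha, b, hb, rfl⟩
      · exact StarFree.concat _ _ ih₁ h₂

end SFAux

section P2
variable {A : Type*} {M : Type*} [Monoid M]

namespace SFAux2

def evalW (f : A → M) (w : List A) : M := (w.map f).prod

@[simp] lemma evalW_nil (f : A → M) : evalW f [] = 1 := rfl
@[simp] lemma evalW_cons (f : A → M) (a : A) (w : List A) :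
    evalW f (a :: w) = f a * evalW f w := by simp [evalW]
@[simp] lemma evalW_append (f : A → M) (x y : List A) :
    evalW f (x ++ y) = evalW f x * evalW f y := by simp [evalW]

def Lang (B : Finset A) (f : A → M) (m : M) : Language A :=
  {w | (∀ a ∈ w, a ∈ B) ∧ evalW f w = m}

def Allowed (B : Finset A) : Language A := {w | ∀ a ∈ w, a ∈ B}

lemma mem_top_single_top (a : A) (w : List A) :
    w ∈ (⊤ : Language A) * {[a]} * ⊤ ↔ a ∈ w := by
  constructor
  · rintro ⟨p, ⟨u, -, s, hs, rfl⟩, q, -, rfl⟩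
    change s = [a] at hs; subst hs
    simp
  · intro h
    obtain ⟨s, t, rfl⟩ := List.append_of_mem h
    exact ⟨s ++ [a], ⟨s, trivial, [a], rfl, rfl⟩, t, trivial, by simp⟩

lemma sf_top_single_top (a : A) : StarFree ((⊤ : Language A) * {[a]} * ⊤) :=
  StarFree.concat _ _ (StarFree.concat _ _ SFAux.sf_univ
    (StarFree.finite _ (Set.finite_singleton _))) SFAux.sf_univ

lemma sf_allowed [Fintype A] (B : Finset A) : StarFree (Allowed B) := by
  apply SFAux.sf_congr
    (L₁ := ({w : List A | ∃ a ∈ {a : A | a ∉ B}, w ∈ (⊤ : Language A) * {[a]} * ⊤})ᶜ)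
  · ext w
    simp only [SFAux.mem_compl, SFAux.mem_setOf_lang, Allowed]
    constructor
    · intro h a ha
      by_contra hc
      exact h ⟨a, hc, (mem_top_single_top a w).2 ha⟩
    · rintro h ⟨a, ha, hmem⟩
      exact ha (h a ((mem_top_single_top a w).1 hmem))
  · exact StarFree.compl _ (SFAux.sf_biUnion (Set.toFinite _)
      (fun a _ => sf_top_single_top a))

section Del
variable [DecidableEq A]

def del (c : A) (w : List A) : List A := w.filter (fun a => a ≠ c)

@[simp] lemma del_nil (c : A) : del c [] = [] := rfl
lemma del_cons_self (c : A) (w : List A) : del c (c :: w) = del c w := by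
  simp [del]
lemma del_cons_ne (c : A) {a : A} (h : a ≠ c) (w : List A) :
    del c (a :: w) = a :: del c w := by simp [del, h]
@[simp] lemma del_append (c : A) (x y : List A) : del c (x ++ y) = del c x ++ del c y := by
  simp [del]

lemma del_split (c : A) : ∀ (w x₁ x₂ : List A), del c w = x₁ ++ x₂ →
    ∃ w₁ w₂, w = w₁ ++ w₂ ∧ del c w₁ = x₁ ∧ del c w₂ = x₂ := by
  intro w
  induction w with
  | nil =>
    intro x₁ x₂ h
    obtain ⟨rfl, rfl⟩ : x₁ = [] ∧ x₂ = [] := List.append_eq_nil_iff.mp h.symm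
    exact ⟨[], [], rfl, rfl, rfl⟩
  | cons b w ih =>
    intro x₁ x₂ h
    by_cases hb : b = c
    · subst hb
      rw [del_cons_self] at h
      obtain ⟨w₁, w₂, rfl, h1, h2⟩ := ih x₁ x₂ h
      exact ⟨b :: w₁, w₂, rfl, by rw [del_cons_self]; exact h1, h2⟩
    · rw [del_cons_ne c hb] at h
      rcases x₁ with _ | ⟨x0, x₁⟩
      · refine ⟨[], b :: w, rfl, rfl, ?_⟩
        rw [List.nil_append] at h
        rw [del_cons_ne c hb]; exact h
      · rw [List.cons_append] at h
        obtain ⟨rfl, h'⟩ : b = x0 ∧ del c w = x₁ ++ x₂ :=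
          ⟨(List.cons.injEq .. ▸ h).1, (List.cons.injEq .. ▸ h).2⟩
        obtain ⟨w₁, w₂, rfl, h1, h2⟩ := ih x₁ x₂ h'
        exact ⟨b :: w₁, w₂, rfl, by rw [del_cons_ne c hb, h1], h2⟩

lemma del_eq_nil_iff (c : A) (w : List A) : del c w = [] ↔ ∀ a ∈ w, a = c := by
  simp [del, List.filter_eq_nil_iff]

lemma first_keep (c : A) : ∀ (w : List A) {a : A} {x : List A}, a ≠ c →
    del c w = a :: x →
    ∃ w₁ w₂, w = w₁ ++ [a] ++ w₂ ∧ (∀ b ∈ w₁, b = c) ∧ del c w₂ = x := by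
  intro w
  induction w with
  | nil => intro a x _ h; simp [del] at h
  | cons b w ih =>
    intro a x ha h
    by_cases hb : b = c
    · subst hb
      rw [del_cons_self] at h
      obtain ⟨w₁, w₂, rfl, h1, h2⟩ := ih ha h
      refine ⟨b :: w₁, w₂, rfl, ?_, h2⟩
      rintro b' hb'
      rcases List.mem_cons.mp hb' with rfl | hb''
      · rfl
      · exact h1 _ hb'' 
    · rw [del_cons_ne c hb] at h
      obtain ⟨rfl, rfl⟩ : b = a ∧ del c w = x :=
        ⟨(List.cons.injEq .. ▸ h).1, (List.cons.injEq .. ▸ h).2⟩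
      exact ⟨[], w, rfl, by simp, rfl⟩

lemma sf_del_eq [Fintype A] (c : A) : ∀ (x : List A), StarFree {w : List A | del c w = x} := by
  intro x
  induction x with
  | nil =>
    apply SFAux.sf_congr (L₁ := Allowed {c})
    · ext w
      simp only [Allowed, SFAux.mem_setOf_lang, del_eq_nil_iff]
      constructor
      · intro h a ha; simpa using h a ha
      · intro h a ha; exact Finset.mem_singleton.mpr (h a ha)
    · exact sf_allowed _
  | cons a x ih =>
    by_cases ha : a = c
    · subst ha
      apply SFAux.sf_congr (L₁ := (⊥ : Language A))
      · ext w
        refine iff_of_false id ?_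
        intro h
        have : a ∈ del a w := by rw [h]; exact List.mem_cons_self
        simp [del] at this
      · exact SFAux.sf_empty
    · apply SFAux.sf_congr (L₁ := Allowed {c} * {[a]} * (show Language A from {w : List A | del c w = x}))
      · ext w
        constructor
        · rintro ⟨p, ⟨w₁, hw₁, s, hs, rfl⟩, w₂, hw₂, rfl⟩
          change s = [a] at hs; subst hs
          have hw₁' : del c w₁ = [] := by
            rw [del_eq_nil_iff]; intro b hb; simpa using hw₁ b hb
          show del c _ = _
          rw [del_append, del_append, hw₁', del_cons_ne c ha, hw₂]
          rfl
        · intro h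
          obtain ⟨w₁, w₂, rfl, h1, h2⟩ := first_keep c w ha h
          exact ⟨w₁ ++ [a], ⟨w₁, fun b hb => by simpa using h1 b hb, [a], rfl, rfl⟩,
            w₂, h2, by simp⟩
      · exact StarFree.concat _ _ (StarFree.concat _ _ (sf_allowed _)
          (StarFree.finite _ (Set.finite_singleton _))) ih

lemma sf_del_preimage [Fintype A] (c : A) {K : Language A} (h : StarFree K) :
    StarFree {w : List A | del c w ∈ K} := by
  induction h with
  | finite K hK =>
    apply SFAux.sf_congr (L₁ := {w : List A | ∃ x ∈ K, w ∈ (show Language A from {w : List A | del c w = x})})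
    · ext w
      simp only [SFAux.mem_setOf_lang]
      constructor
      · rintro ⟨x, hx, h⟩; show del c w ∈ K; rw [h]; exact hx
      · intro h; exact ⟨del c w, h, rfl⟩
    · exact SFAux.sf_biUnion hK (fun x _ => sf_del_eq c x)
  | union K₁ K₂ h₁ h₂ ih₁ ih₂ =>
    exact SFAux.sf_congr (by ext w; exact Iff.rfl) (StarFree.union _ _ ih₁ ih₂)
  | inter K₁ K₂ h₁ h₂ ih₁ ih₂ =>
    exact SFAux.sf_congr (by ext w; exact Iff.rfl) (StarFree.inter _ _ ih₁ ih₂)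
  | compl K h ih =>
    exact SFAux.sf_congr (by ext w; exact Iff.rfl) (StarFree.compl _ ih)
  | concat K₁ K₂ h₁ h₂ ih₁ ih₂ =>
    apply SFAux.sf_congr
      (L₁ := (show Language A from {w | del c w ∈ K₁}) * (show Language A from {w : List A | del c w ∈ K₂}))
    · ext w
      constructor
      · rintro ⟨p, hp, q, hq, rfl⟩
        show del c (p ++ q) ∈ K₁ * K₂
        rw [del_append]
        exact Language.append_mem_mul hp hq
      · rintro (h : del c w ∈ K₁ * K₂)
        obtain ⟨x₁, hx₁, x₂, hx₂, hx⟩ := h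
        obtain ⟨w₁, w₂, rfl, h1, h2⟩ := del_split c w x₁ x₂ hx.symm
        exact ⟨w₁, by rw [Set.mem_setOf_eq, h1]; exact hx₁,
               w₂, by rw [Set.mem_setOf_eq, h2]; exact hx₂, rfl⟩
    · exact StarFree.concat _ _ ih₁ ih₂

end Del
end SFAux2
end P2
section P3
namespace SFAux3

def Aperiodic (M : Type*) [Monoid M] : Prop := ∀ x : M, ∃ n, x ^ (n+1) = x ^ (n+2)

variable {M : Type*} [Monoid M]

/-- The local divisor of `M` at `mc`. -/
def LD (mc : M) := {x : M // (∃ u, x = u * mc) ∧ (∃ v, x = mc * v)}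

namespace LD
variable {mc : M}

instance instOne : One (LD mc) := ⟨⟨mc, ⟨1, (one_mul mc).symm⟩, ⟨1, (mul_one mc).symm⟩⟩⟩

noncomputable instance instMul : Mul (LD mc) :=
  ⟨fun x y => ⟨Classical.choose x.2.1 * y.1, by
      obtain ⟨y1, hy1⟩ := y.2.1
      exact ⟨Classical.choose x.2.1 * y1, by rw [hy1, mul_assoc]⟩, by
      obtain ⟨vx, hvx⟩ := x.2.2
      obtain ⟨vy, hvy⟩ := y.2.2
      refine ⟨vx * vy, ?_⟩
      have hx : Classical.choose x.2.1 * mc = x.1 := (Classical.choose_spec x.2.1).symm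
      rw [hvy, ← mul_assoc, hx, hvx, mul_assoc]⟩⟩

lemma one_val : (1 : LD mc).1 = mc := rfl

lemma mul_val (x y : LD mc) (u : M) (hu : x.1 = u * mc) : (x * y).1 = u * y.1 := by
  show Classical.choose x.2.1 * y.1 = u * y.1
  obtain ⟨vy, hvy⟩ := y.2.2
  have hx : Classical.choose x.2.1 * mc = x.1 := (Classical.choose_spec x.2.1).symm
  rw [hvy, ← mul_assoc, hx, hu, mul_assoc]

lemma mul_val' (x y : LD mc) (v : M) (hv : y.1 = mc * v) : (x * y).1 = x.1 * v := by
  obtain ⟨u, hu⟩ := x.2.1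
  rw [mul_val x y u hu, hu, hv, mul_assoc]

noncomputable instance instMonoid : Monoid (LD mc) where
  mul_assoc x y z := by
    apply Subtype.ext
    obtain ⟨u, hu⟩ := x.2.1
    obtain ⟨uy, huy⟩ := y.2.1
    have h2 : (x * y).1 = (u * uy) * mc := by rw [mul_val x y u hu, huy, mul_assoc]
    rw [mul_val (x * y) z _ h2, mul_val x (y * z) u hu, mul_val y z uy huy, mul_assoc]
  one_mul x := by
    apply Subtype.ext
    rw [mul_val 1 x 1 (by rw [one_val, one_mul]), one_mul]
  mul_one x := by
    apply Subtype.ext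
    rw [mul_val' x 1 1 (by rw [one_val, mul_one]), mul_one]

lemma pow_val (x : LD mc) (u : M) (hu : x.1 = u * mc) :
    ∀ n, (x ^ (n + 1)).1 = u ^ n * x.1 := by
  intro n
  induction n with
  | zero => simp
  | succ n ih =>
    have : x ^ (n + 2) = x * x ^ (n + 1) := by
      rw [pow_succ']
    rw [this, mul_val x _ u hu, ih, ← mul_assoc, ← pow_succ']

lemma aperiodic (hap : Aperiodic M) : Aperiodic (LD mc) := by
  intro x
  obtain ⟨u, hu⟩ := x.2.1
  obtain ⟨n, hn⟩ := hap u
  refine ⟨n + 1, Subtype.ext ?_⟩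
  rw [pow_val x u hu, pow_val x u hu, hn]

lemma one_not_mem (hap : Aperiodic M) (hmc : mc ≠ 1) :
    ¬((∃ u, (1 : M) = u * mc) ∧ (∃ v, (1 : M) = mc * v)) := by
  rintro ⟨⟨u, hu⟩, ⟨v, hv⟩⟩
  apply hmc
  have key : ∀ k, u ^ k * mc ^ k = 1 := by
    intro k
    induction k with
    | zero => simp
    | succ k ih =>
      have h1 : u * mc ^ (k + 1) = mc ^ k := by
        rw [pow_succ', ← mul_assoc, ← hu, one_mul]
      calc u ^ (k+1) * mc ^ (k+1) = u ^ k * (u * mc ^ (k+1)) := by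
            rw [pow_succ, mul_assoc]
        _ = u ^ k * mc ^ k := by rw [h1]
        _ = 1 := ih
  obtain ⟨n, hn⟩ := hap mc
  calc mc = (u ^ (n+1) * mc ^ (n+1)) * mc := by rw [key, one_mul]
    _ = u ^ (n+1) * mc ^ (n+2) := by rw [mul_assoc, ← pow_succ]
    _ = u ^ (n+1) * mc ^ (n+1) := by rw [← hn]
    _ = 1 := key (n+1)

lemma card_lt [Fintype M] (hap : Aperiodic M) (hmc : mc ≠ 1) :
    ∀ (inst : Fintype (LD mc)), @Fintype.card (LD mc) inst < Fintype.card M := by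
  intro inst
  exact @Fintype.card_lt_of_injective_of_notMem (LD mc) M inst _
    Subtype.val Subtype.val_injective 1
    (by rintro ⟨⟨x, hx⟩, rfl⟩; exact one_not_mem hap hmc hx)

noncomputable instance instFintype [Fintype M] : Fintype (LD mc) :=
  @Subtype.fintype M _ (Classical.decPred _) _

end LD
end SFAux3
end P3
section P4
namespace SFAux4
open SFAux SFAux2

variable {A : Type*} {M : Type*} [Monoid M]

def rho' (c : A) (l : List (List A)) : List A := (l.map (· ++ [c])).flatten

@[simp] lemma rho'_nil (c : A) : rho' c ([] : List (List A)) = [] := rfl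

lemma rho'_cons (c : A) (u : List A) (l : List (List A)) :
    rho' c (u :: l) = u ++ c :: rho' c l := by
  simp [rho']

lemma rho'_append (c : A) (l₁ l₂ : List (List A)) :
    rho' c (l₁ ++ l₂) = rho' c l₁ ++ rho' c l₂ := by
  simp [rho']

def Good (B' : Finset A) (l : List (List A)) : Prop := ∀ u ∈ l, ∀ a ∈ u, a ∈ B'

lemma good_nil (B' : Finset A) : Good B' ([] : List (List A)) := by intro u hu; cases hu

def Pull (c : A) (B' : Finset A) (f : A → M) (K : Language M) : Language A :=
  {z | ∃ l, Good B' l ∧ z = c :: rho' c l ∧ (l.map (evalW f)) ∈ K}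

lemma first_c_unique (c : A) : ∀ (u u' r r' : List A), c ∉ u → c ∉ u' →
    u ++ c :: r = u' ++ c :: r' → u = u' ∧ r = r' := by
  intro u
  induction u with
  | nil =>
    intro u' r r' _ hu' h
    rcases u' with _ | ⟨b, u'⟩
    · simpa using h
    · rw [List.nil_append, List.cons_append] at h
      have hb : b = c := ((List.cons.injEq ..).mp h).1.symm
      exact absurd (hb ▸ (List.mem_cons_self (a := b) (l := u'))) hu'
  | cons a u ih =>
    intro u' r r' hu hu' h
    rcases u' with _ | ⟨b, u'⟩
    · rw [List.nil_append, List.cons_append] at h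
      have : a = c := ((List.cons.injEq ..).mp h).1
      exact absurd (this ▸ (List.mem_cons_self (a := a) (l := u))) hu
    · rw [List.cons_append, List.cons_append] at h
      obtain ⟨rfl, h2⟩ := (List.cons.injEq ..).mp h
      obtain ⟨rfl, rfl⟩ := ih u' r r' (fun hc => hu (List.mem_cons_of_mem _ hc))
        (fun hc => hu' (List.mem_cons_of_mem _ hc)) h2
      exact ⟨rfl, rfl⟩

lemma not_mem_of_good {B' : Finset A} {c : A} (hc : c ∉ B') {l : List (List A)}
    (hl : Good B' l) {u : List A} (hu : u ∈ l) : c ∉ u :=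
  fun h => hc (hl u hu c h)

lemma rho'_inj {c : A} {B' : Finset A} (hc : c ∉ B') :
    ∀ (l l' : List (List A)), Good B' l → Good B' l' → rho' c l = rho' c l' → l = l' := by
  intro l
  induction l with
  | nil =>
    intro l' _ hg' h
    rcases l' with _ | ⟨u, l'⟩
    · rfl
    · rw [rho'_nil, rho'_cons] at h
      exact absurd h.symm (by simp)
  | cons u l ih =>
    intro l' hg hg' h
    rcases l' with _ | ⟨u', l'⟩
    · rw [rho'_cons, rho'_nil] at h
      exact absurd h (by simp)
    · rw [rho'_cons, rho'_cons] at h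
      obtain ⟨rfl, h2⟩ := first_c_unique c u u' _ _
        (not_mem_of_good hc hg (List.mem_cons_self))
        (not_mem_of_good hc hg' (List.mem_cons_self)) h
      rw [ih l' (fun v hv => hg v (List.mem_cons_of_mem _ hv))
        (fun v hv => hg' v (List.mem_cons_of_mem _ hv)) h2]

lemma rho'_ends (c : A) (l : List (List A)) : ∃ y, c :: rho' c l = y ++ [c] := by
  induction l with
  | nil => exact ⟨[], rfl⟩
  | cons u l ih =>
    obtain ⟨y, hy⟩ := ih
    refine ⟨c :: u ++ y, ?_⟩
    rw [rho'_cons]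
    simp only [List.cons_append, List.append_assoc] at hy ⊢
    rw [hy]

lemma rho'_letters {c : A} {B B' : Finset A} (hcB : c ∈ B) (hBB : B' ⊆ B)
    {l : List (List A)} (hl : Good B' l) : ∀ a ∈ c :: rho' c l, a ∈ B := by
  induction l with
  | nil => intro a ha; rcases List.mem_cons.mp ha with rfl | h; exacts [hcB, absurd h (by simp)]
  | cons u l ih =>
    intro a ha
    rw [rho'_cons] at ha
    rcases List.mem_cons.mp ha with rfl | h
    · exact hcB
    · rcases List.mem_append.mp h with h1 | h2
      · exact hBB (hl u (List.mem_cons_self) a h1)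
      · exact ih (fun v hv => hl v (List.mem_cons_of_mem _ hv)) a h2

end SFAux4
end P4
section P4b
namespace SFAux4
open SFAux SFAux2

variable {A : Type*} {M : Type*} [Monoid M]

lemma first_occ {c : A} : ∀ {w : List A}, c ∈ w → ∃ u r, w = u ++ c :: r ∧ c ∉ u := by
  intro w
  induction w with
  | nil => intro h; cases h
  | cons b w ih =>
    intro h
    by_cases hb : b = c
    · exact ⟨[], w, by simp [hb], by simp⟩
    · have : c ∈ w := by
        rcases List.mem_cons.mp h with h1 | h1
        · exact absurd h1.symm hb
        · exact h1
      obtain ⟨u, r, rfl, hu⟩ := ih this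
      refine ⟨b :: u, r, rfl, ?_⟩
      intro hc
      rcases List.mem_cons.mp hc with h2 | h2
      exacts [hb h2.symm, hu h2]

lemma ends_of_append {c : A} : ∀ (x : List A) {t s : List A}, t ≠ [] → x ++ t = s ++ [c] →
    ∃ t', t = t' ++ [c] := by
  intro x
  induction x with
  | nil => intro t s _ h; exact ⟨s, by simpa using h⟩
  | cons a x ih =>
    intro t s ht h
    rcases s with _ | ⟨b, s⟩
    · rw [List.nil_append, List.cons_append] at h
      obtain ⟨-, h2⟩ := (List.cons.injEq ..).mp h
      exact absurd h2 (List.append_ne_nil_of_right_ne_nil x ht)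
    · rw [List.cons_append, List.cons_append] at h
      exact ih ht ((List.cons.injEq ..).mp h).2

lemma parse_aux [DecidableEq A] {c : A} {B' : Finset A} :
    ∀ (n : ℕ) (z₀ : List A), z₀.length ≤ n → (∀ a ∈ z₀, a ∈ insert c B') →
    (z₀ = [] ∨ ∃ y, z₀ = y ++ [c]) →
    ∃ l, Good B' l ∧ z₀ = rho' c l := by
  intro n
  induction n with
  | zero =>
    intro z₀ hlen _ _
    have : z₀ = [] := List.length_eq_zero_iff.mp (Nat.le_zero.mp hlen)
    exact ⟨[], good_nil _, by rw [this, rho'_nil]⟩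
  | succ n ih =>
    intro z₀ hlen hB hend
    rcases hend with rfl | ⟨y, rfl⟩
    · exact ⟨[], good_nil _, rfl⟩
    · have hcz : c ∈ y ++ [c] := List.mem_append.mpr (Or.inr (List.mem_singleton.mpr rfl))
      obtain ⟨u, r, hur, hu⟩ := first_occ hcz
      have hrend : r = [] ∨ ∃ y₁, r = y₁ ++ [c] := by
        rcases r with _ | ⟨r0, r'⟩
        · exact Or.inl rfl
        · have h5 : (u ++ [c]) ++ (r0 :: r') = y ++ [c] := by
            rw [List.append_assoc, List.singleton_append, ← hur]
          exact Or.inr (ends_of_append (u ++ [c]) (by simp) h5)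
      have hlen' : r.length ≤ n := by
        have h1 : (y ++ [c]).length = u.length + 1 + r.length := by
          rw [hur]; simp [Nat.add_comm, Nat.add_assoc, Nat.add_left_comm]
        omega
      have hBr : ∀ a ∈ r, a ∈ insert c B' := by
        intro a ha
        exact hB a (by rw [hur]; exact List.mem_append.mpr (Or.inr (List.mem_cons_of_mem _ ha)))
      obtain ⟨l₁, hgood, hrl⟩ := ih r hlen' hBr hrend
      refine ⟨u :: l₁, ?_, ?_⟩
      · intro v hv a ha
        rcases List.mem_cons.mp hv with rfl | hv'
        · have := hB a (by rw [hur]; exact List.mem_append.mpr (Or.inl ha))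
          rcases Finset.mem_insert.mp this with rfl | h
          · exact absurd ha hu
          · exact h
        · exact hgood v hv' a ha
      · rw [hur, rho'_cons, hrl]

lemma parse [DecidableEq A] {c : A} {B' : Finset A} {z : List A}
    (hB : ∀ a ∈ z, a ∈ insert c B') {z₀ : List A} (hz : z = c :: z₀)
    (hend : ∃ y, z = y ++ [c]) :
    ∃ l, Good B' l ∧ z = c :: rho' c l := by
  have hB0 : ∀ a ∈ z₀, a ∈ insert c B' := fun a ha =>
    hB a (by rw [hz]; exact List.mem_cons_of_mem _ ha)
  have hend0 : z₀ = [] ∨ ∃ y, z₀ = y ++ [c] := by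
    obtain ⟨y, hy⟩ := hend
    rcases y with _ | ⟨y0, y⟩
    · left
      rw [hz] at hy
      simpa using hy
    · right
      rw [hz, List.cons_append] at hy
      exact ⟨y, ((List.cons.injEq ..).mp hy).2⟩
  obtain ⟨l, h1, h2⟩ := parse_aux z₀.length z₀ le_rfl hB0 hend0
  exact ⟨l, h1, by rw [hz, h2]⟩

end SFAux4
end P4b
section P5
namespace SFAux5
open SFAux SFAux2 SFAux3 SFAux4

variable {A : Type*} {M : Type*} [Monoid M]

lemma sf_pull_single [Fintype A] [DecidableEq A] (c : A) (B' : Finset A) (f : A → M)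
    (hLang : ∀ m, StarFree (Lang B' f m)) :
    ∀ x : List M, StarFree (Pull c B' f {x}) := by
  intro x
  induction x with
  | nil =>
    apply sf_congr (L₁ := ({[c]} : Language A))
    · ext z
      constructor
      · intro hz
        have hz' : z = [c] := hz
        exact ⟨[], good_nil _, by rw [hz']; rfl, rfl⟩
      · rintro ⟨l, hg, rfl, hmem⟩
        have : l.map (evalW f) = [] := hmem
        have hl : l = [] := List.map_eq_nil_iff.mp this
        rw [hl]
        rfl
    · exact StarFree.finite _ (Set.finite_singleton _)
  | cons m₀ x ih =>
    apply sf_congr (L₁ := ({[c]} : Language A) * Lang B' f m₀ * Pull c B' f {x})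
    · ext z
      constructor
      · rintro ⟨p, ⟨s, hs, u, hu, rfl⟩, q, hq, rfl⟩
        have hs' : s = [c] := hs
        subst hs'
        obtain ⟨hub, hue⟩ := hu
        obtain ⟨l, hg, rfl, hmem⟩ := hq
        refine ⟨u :: l, ?_, ?_, ?_⟩
        · intro v hv a ha
          rcases List.mem_cons.mp hv with rfl | hv'
          exacts [hub a ha, hg v hv' a ha]
        · rw [rho'_cons]; simp
        · have : (u :: l).map (evalW f) = evalW f u :: l.map (evalW f) := rfl
          rw [this, hue]
          have hx : l.map (evalW f) = x := hmem
          rw [hx]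
          rfl
      · rintro ⟨l, hg, rfl, hmem⟩
        have : l.map (evalW f) = m₀ :: x := hmem
        rcases l with _ | ⟨u, l'⟩
        · simp at this
        · obtain ⟨h1, h2⟩ := (List.cons.injEq ..).mp (by simpa using this)
          refine ⟨[c] ++ u, ⟨[c], rfl, u, ⟨fun a ha => hg u (List.mem_cons_self) a ha, h1⟩, rfl⟩,
            c :: rho' c l', ⟨l', fun v hv => hg v (List.mem_cons_of_mem _ hv), rfl, by rw [h2]; rfl⟩, ?_⟩
          rw [rho'_cons]
          simp
    · exact StarFree.concat _ _ (StarFree.concat _ _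
        (StarFree.finite _ (Set.finite_singleton _)) (hLang m₀)) ih

lemma sf_pullTop [Fintype A] [DecidableEq A] (c : A) (B' : Finset A) (hc : c ∉ B') (f : A → M) :
    StarFree (Pull c B' f ⊤) := by
  apply sf_congr
    (L₁ := Allowed (insert c B') ⊓ (({[c]} : Language A) * ⊤) ⊓ ((⊤ : Language A) * {[c]}))
  · ext z
    constructor
    · rintro ⟨⟨hall, hstart⟩, hend⟩
      obtain ⟨p, hp, t, -, rfl⟩ := hstart
      have hp' : p = [c] := hp
      subst hp'
      obtain ⟨y, -, q, hq, hyq⟩ := hend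
      have hq' : q = [c] := hq
      subst hq'
      obtain ⟨l, hg, hz⟩ := parse hall (z₀ := t) (by simp) ⟨y, hyq.symm⟩
      exact ⟨l, hg, hz, trivial⟩
    · rintro ⟨l, hg, rfl, -⟩
      refine ⟨⟨rho'_letters (Finset.mem_insert_self c B') (Finset.subset_insert c B') hg, ?_⟩, ?_⟩
      · exact ⟨[c], rfl, rho' c l, trivial, rfl⟩
      · obtain ⟨y, hy⟩ := rho'_ends c l
        exact ⟨y, trivial, [c], rfl, hy.symm⟩
  · exact StarFree.inter _ _ (StarFree.inter _ _ (sf_allowed _)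
      (StarFree.concat _ _ (StarFree.finite _ (Set.finite_singleton _)) sf_univ))
      (StarFree.concat _ _ sf_univ (StarFree.finite _ (Set.finite_singleton _)))

lemma sf_pull [Fintype A] [DecidableEq A] (c : A) (B' : Finset A) (hc : c ∉ B') (f : A → M)
    (hLang : ∀ m, StarFree (Lang B' f m)) {K : Language M} (hK : StarFree K) :
    StarFree (Pull c B' f K) := by
  induction hK with
  | finite K hfin =>
    apply sf_congr (L₁ := {w : List A | ∃ x ∈ K, w ∈ Pull c B' f {x}})
    · ext z
      constructor
      · rintro ⟨x, hx, l, hg, rfl, hmem⟩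
        have : l.map (evalW f) = x := hmem
        exact ⟨l, hg, rfl, by rw [this]; exact hx⟩
      · rintro ⟨l, hg, rfl, hmem⟩
        exact ⟨l.map (evalW f), hmem, l, hg, rfl, rfl⟩
    · exact sf_biUnion hfin (fun x _ => sf_pull_single c B' f hLang x)
  | union K₁ K₂ _ _ ih₁ ih₂ =>
    apply sf_congr (L₁ := Pull c B' f K₁ ⊔ Pull c B' f K₂)
    · ext z
      constructor
      · rintro (⟨l, hg, rfl, hm⟩ | ⟨l, hg, rfl, hm⟩)
        exacts [⟨l, hg, rfl, Or.inl hm⟩, ⟨l, hg, rfl, Or.inr hm⟩]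
      · rintro ⟨l, hg, rfl, hm | hm⟩
        exacts [Or.inl ⟨l, hg, rfl, hm⟩, Or.inr ⟨l, hg, rfl, hm⟩]
    · exact StarFree.union _ _ ih₁ ih₂
  | inter K₁ K₂ _ _ ih₁ ih₂ =>
    apply sf_congr (L₁ := Pull c B' f K₁ ⊓ Pull c B' f K₂)
    · ext z
      constructor
      · rintro ⟨⟨l, hg, rfl, hm⟩, ⟨l', hg', hz', hm'⟩⟩
        have hll : l = l' := rho'_inj hc l l' hg hg' (by
          have := (List.cons.injEq ..).mp hz'
          exact this.2)
        exact ⟨l, hg, rfl, hm, by rw [hll]; exact hm'⟩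
      · rintro ⟨l, hg, rfl, hm₁, hm₂⟩
        exact ⟨⟨l, hg, rfl, hm₁⟩, ⟨l, hg, rfl, hm₂⟩⟩
    · exact StarFree.inter _ _ ih₁ ih₂
  | compl K _ ih =>
    apply sf_congr (L₁ := Pull c B' f ⊤ ⊓ (Pull c B' f K)ᶜ)
    · ext z
      constructor
      · rintro ⟨⟨l, hg, rfl, -⟩, hnot⟩
        refine ⟨l, hg, rfl, ?_⟩
        intro hmem
        exact hnot ⟨l, hg, rfl, hmem⟩
      · rintro ⟨l, hg, rfl, hm⟩
        refine ⟨⟨l, hg, rfl, trivial⟩, ?_⟩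
        rintro ⟨l', hg', hz', hm'⟩
        have hll : l = l' := rho'_inj hc l l' hg hg' ((List.cons.injEq ..).mp hz').2
        exact hm (by rw [hll]; exact hm')
    · exact StarFree.inter _ _ (sf_pullTop c B' hc f) (StarFree.compl _ ih)
  | concat K₁ K₂ _ _ ih₁ ih₂ =>
    apply sf_congr
      (L₁ := Pull c B' f K₁ * (show Language A from {w : List A | c :: w ∈ Pull c B' f K₂}))
    · ext z
      constructor
      · rintro ⟨p, ⟨l₁, hg₁, rfl, hm₁⟩, q, hq, rfl⟩
        obtain ⟨l₂, hg₂, hq₂, hm₂⟩ := hq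
        have hq' : q = rho' c l₂ := ((List.cons.injEq ..).mp hq₂).2
        refine ⟨l₁ ++ l₂, ?_, ?_, ?_⟩
        · intro v hv
          rcases List.mem_append.mp hv with h | h
          exacts [hg₁ v h, hg₂ v h]
        · rw [rho'_append, hq']
          simp
        · rw [List.map_append]
          exact Language.append_mem_mul hm₁ hm₂
      · rintro ⟨l, hg, rfl, hm⟩
        obtain ⟨x₁, hx₁, x₂, hx₂, hx⟩ := hm
        set n := x₁.length with hn
        have hmap : l.map (evalW f) = x₁ ++ x₂ := by simpa using hx.symm
        have htake : (l.take n).map (evalW f) = x₁ := by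
          rw [List.map_take, hmap, hn, List.take_left]
        have hdrop : (l.drop n).map (evalW f) = x₂ := by
          rw [List.map_drop, hmap, hn, List.drop_left]
        have hgt : Good B' (l.take n) := fun v hv =>
          hg v (by
            have := List.take_append_drop n l
            rw [← this]
            exact List.mem_append.mpr (Or.inl hv))
        have hgd : Good B' (l.drop n) := fun v hv =>
          hg v (by
            have := List.take_append_drop n l
            rw [← this]
            exact List.mem_append.mpr (Or.inr hv))
        refine ⟨c :: rho' c (l.take n), ⟨l.take n, hgt, rfl, by rw [htake]; exact hx₁⟩,
          rho' c (l.drop n), ⟨l.drop n, hgd, rfl, by rw [hdrop]; exact hx₂⟩, ?_⟩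
        show (c :: rho' c (l.take n)) ++ rho' c (l.drop n) = c :: rho' c l
        have : rho' c (l.take n) ++ rho' c (l.drop n) = rho' c l := by
          rw [← rho'_append, List.take_append_drop]
        rw [List.cons_append, this]
    · exact StarFree.concat _ _ ih₁ (sf_deriv c ih₂)

end SFAux5
end P5
section P6
namespace SFAux6
open SFAux SFAux2 SFAux3 SFAux4 SFAux5

universe u

variable {A : Type*} {M : Type*} [Monoid M]

lemma val_evalW_g (c : A) (f : A → M) {g : M → LD (f c)}
    (hg : ∀ t, (g t).1 = f c * t * f c) :
    ∀ l : List (List A), (evalW g (l.map (evalW f))).1 = evalW f (c :: rho' c l) := by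
  intro l
  induction l with
  | nil =>
    show (1 : LD (f c)).1 = evalW f [c]
    rw [LD.one_val]
    simp
  | cons u l ih =>
    have h1 : (u :: l).map (evalW f) = evalW f u :: l.map (evalW f) := rfl
    rw [h1, evalW_cons]
    rw [LD.mul_val (g (evalW f u)) (evalW g (l.map (evalW f))) (f c * evalW f u)
      (by rw [hg])]
    rw [ih]
    rw [rho'_cons]
    simp [mul_assoc]

theorem key : ∀ (k : ℕ) (A : Type u) (M : Type u), ∀ (_ : Fintype A) (_ : Fintype M)
    (_ : Monoid M), Fintype.card M ≤ k → Aperiodic M →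
    ∀ (f : A → M) (B : Finset A) (m : M), StarFree (Lang B f m) := by
  intro k
  induction k using Nat.strong_induction_on with
  | _ k IHk =>
  intro A M instA instM instMon hcard hap f B
  classical
  induction B using Finset.strongInduction with
  | _ B IHB =>
  intro m
  rcases B.eq_empty_or_nonempty with rfl | ⟨c, hcB⟩
  · apply StarFree.finite
    apply Set.Finite.subset (Set.finite_singleton ([] : List A))
    rintro w ⟨hall, -⟩
    cases w with
    | nil => exact rfl
    | cons a w => exact absurd (hall a (List.mem_cons_self)) (Finset.notMem_empty a)
  · set B' := B.erase c with hB'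
    have hcB' : c ∉ B' := Finset.notMem_erase c B
    have hsub : B' ⊂ B := Finset.erase_ssubset hcB
    have hLang' : ∀ m', StarFree (Lang B' f m') := fun m' => IHB B' hsub m'
    apply sf_congr (L₁ := Lang B' f m ⊔ (Lang B f m ⊓ ((⊤ : Language A) * {[c]} * ⊤)))
    · ext w
      constructor
      · rintro (⟨h1, h2⟩ | ⟨hw, -⟩)
        · exact ⟨fun a ha => Finset.mem_of_mem_erase (h1 a ha), h2⟩
        · exact hw
      · intro hw
        by_cases hcw : c ∈ w
        · exact Or.inr ⟨hw, (mem_top_single_top c w).2 hcw⟩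
        · exact Or.inl ⟨fun a ha => Finset.mem_erase.mpr
            ⟨fun h => hcw (h ▸ ha), hw.1 a ha⟩, hw.2⟩
    · refine StarFree.union _ _ (hLang' m) ?_
      by_cases hmc : f c = 1
      · -- the letter c evaluates to 1 : deletion
        apply sf_congr (L₁ := Allowed B ⊓ ((⊤ : Language A) * {[c]} * ⊤)
          ⊓ (show Language A from {w | del c w ∈ Lang B' f m}))
        · have evalW_del : ∀ w : List A, evalW f (del c w) = evalW f w := by
            intro w
            induction w with
            | nil => rfl
            | cons b w ih =>
              by_cases hb : b = c
              · rw [hb, del_cons_self, evalW_cons, hmc, one_mul, ih]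
              · rw [del_cons_ne c hb, evalW_cons, evalW_cons, ih]
          ext w
          constructor
          · rintro ⟨⟨hall, hmem⟩, hdel⟩
            refine ⟨⟨hall, ?_⟩, hmem⟩
            rw [← hdel.2, evalW_del]
          · rintro ⟨⟨hall, heval⟩, hmem⟩
            refine ⟨⟨hall, hmem⟩, ?_, ?_⟩
            · intro a ha
              have haw : a ∈ w := List.mem_of_mem_filter ha
              have hane : a ≠ c := by
                have := List.of_mem_filter ha
                simpa using this
              exact Finset.mem_erase.mpr ⟨hane, hall a haw⟩
            · rw [evalW_del, heval]
        · exact StarFree.inter _ _ (StarFree.inter _ _ (sf_allowed B) (sf_top_single_top c))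
            (sf_del_preimage c (hLang' m))
      · -- local divisor case
        set mc := f c with hmcdef
        let g : M → LD mc := fun t => ⟨mc * t * mc, ⟨mc * t, rfl⟩, ⟨t * mc, mul_assoc _ _ _⟩⟩
        have hgval : ∀ t, (g t).1 = mc * t * mc := fun t => rfl
        have hapLD : Aperiodic (LD mc) := LD.aperiodic hap
        have hcardLD : Fintype.card (LD mc) < k :=
          lt_of_lt_of_le (LD.card_lt hap hmc _) hcard
        have hKe : ∀ e : LD mc, StarFree (Lang (Finset.univ : Finset M) g e) := fun e =>
          IHk (Fintype.card (LD mc)) hcardLD M (LD mc) instM LD.instFintype LD.instMonoid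
            le_rfl hapLD g Finset.univ e
        have hval := val_evalW_g c f hgval
        have hBins : insert c B' = B := Finset.insert_erase hcB
        apply sf_congr (L₁ := {w : List A | ∃ p ∈ {p : M × LD mc × M | p.1 * p.2.1.1 * p.2.2 = m},
          w ∈ Lang B' f p.1 * Pull c B' f (Lang (Finset.univ : Finset M) g p.2.1) * Lang B' f p.2.2})
        · ext w
          constructor
          · -- union → Lang B f m ⊓ hasC
            rintro ⟨⟨s, e, t⟩, hp, ⟨pz, ⟨u₀, hu₀, z, hz, rfl⟩, w₂, hw₂, rfl⟩⟩
            obtain ⟨l, hgood, rfl, hmem⟩ := hz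
            have hez : evalW f (c :: rho' c l) = e.1 := by
              rw [← hval l]
              rw [hmem.2]
            constructor
            · constructor
              · intro a ha
                rcases List.mem_append.mp ha with h | h
                · rcases List.mem_append.mp h with h1 | h2
                  · exact Finset.mem_of_mem_erase (hu₀.1 a h1)
                  · exact rho'_letters (hBins ▸ Finset.mem_insert_self c B')
                      (hBins ▸ Finset.subset_insert c B') hgood a h2
                · exact Finset.mem_of_mem_erase (hw₂.1 a h)
              · rw [evalW_append, evalW_append, hu₀.2, hez, hw₂.2]
                exact hp
            · refine (mem_top_single_top c _).2 ?_
              exact List.mem_append.mpr (Or.inl (List.mem_append.mpr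
                (Or.inr (List.mem_cons_self))))
          · rintro ⟨⟨hall, heval⟩, hhasc⟩
            have hcw : c ∈ w := (mem_top_single_top c w).1 hhasc
            obtain ⟨u₀, r, rfl, hu₀⟩ := first_occ hcw
            -- split c :: r at the last c
            have hcrev : c ∈ (c :: r).reverse := by
              rw [List.mem_reverse]; exact List.mem_cons_self
            obtain ⟨u', r', hrev, hu'⟩ := first_occ hcrev
            obtain ⟨z, hzdef⟩ : ∃ z, z = r'.reverse ++ [c] := ⟨_, rfl⟩
            have hzw : c :: r = z ++ u'.reverse := by
              have h9 := congrArg List.reverse hrev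
              rw [List.reverse_reverse] at h9
              rw [h9, hzdef]
              simp
            have hcnu : c ∉ u'.reverse := by rw [List.mem_reverse]; exact hu'
            have hzhead : ∃ z₀, z = c :: z₀ := by
              rcases hz0 : r'.reverse with _ | ⟨a0, z₀⟩
              · exact ⟨[], by rw [hzdef, hz0]; rfl⟩
              · refine ⟨z₀ ++ [c], ?_⟩
                have : c :: r = a0 :: (z₀ ++ [c] ++ u'.reverse) := by
                  rw [hzw, hzdef, hz0]; simp
                have ha0 : a0 = c := ((List.cons.injEq ..).mp this).1.symm
                rw [hzdef, hz0, ha0]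
                simp
            obtain ⟨z₀, hz₀⟩ := hzhead
            have hzletters : ∀ a ∈ z, a ∈ insert c B' := by
              intro a ha
              rw [hBins]
              apply hall
              rw [hzw] at *
              exact List.mem_append.mpr (Or.inr (by
                rw [hzw]
                exact List.mem_append.mpr (Or.inl ha)))
            obtain ⟨l, hgood, hzeq⟩ := parse hzletters hz₀ ⟨r'.reverse, hzdef⟩
            set e : LD mc := evalW g (l.map (evalW f)) with hedef
            have hez : evalW f z = e.1 := by rw [hedef, hval l, ← hzeq]
            have hw2 : evalW f u₀ * evalW f z * evalW f u'.reverse = m := by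
              have h7 : u₀ ++ c :: r = u₀ ++ z ++ u'.reverse := by
                rw [hzw, List.append_assoc]
              rw [← heval, h7, evalW_append, evalW_append]
            have hmemu₀ : u₀ ∈ Lang B' f (evalW f u₀) :=
              ⟨fun a ha => Finset.mem_erase.mpr ⟨fun h => hu₀ (h ▸ ha),
                hall a (List.mem_append.mpr (Or.inl ha))⟩, rfl⟩
            have hmemz : z ∈ Pull c B' f (Lang (Finset.univ : Finset M) g e) :=
              ⟨l, hgood, hzeq, ⟨fun x _ => Finset.mem_univ x, hedef.symm⟩⟩
            have hau' : ∀ a ∈ u'.reverse, a ∈ B := by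
              intro a ha
              apply hall
              rw [hzw]
              exact List.mem_append.mpr (Or.inr (List.mem_append.mpr (Or.inr ha)))
            have hmemw₂ : u'.reverse ∈ Lang B' f (evalW f u'.reverse) :=
              ⟨fun a ha => Finset.mem_erase.mpr ⟨fun h => hcnu (h ▸ ha), hau' a ha⟩, rfl⟩
            have hw3 : evalW f u₀ * e.1 * evalW f u'.reverse = m := by rw [← hez]; exact hw2
            refine ⟨(evalW f u₀, e, evalW f u'.reverse), by exact hw3, ?_⟩
            refine ⟨u₀ ++ z, ⟨u₀, hmemu₀, z, hmemz, rfl⟩, u'.reverse, hmemw₂, ?_⟩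
            show u₀ ++ z ++ u'.reverse = u₀ ++ c :: r
            rw [hzw, List.append_assoc]
        · apply sf_biUnion (Set.toFinite _)
          rintro ⟨s, e, t⟩ -
          exact StarFree.concat _ _ (StarFree.concat _ _ (hLang' s)
            (sf_pull c B' hcB' f hLang' (hKe e))) (hLang' t)

end SFAux6
end P6
section P7
namespace SFAux7
open SFAux

variable {A : Type*}

lemma assemble (u p q w' : List A) {v : List A} (hpq : v = p ++ q) (i j : ℕ) :
    (u ++ wpow v i ++ p) ++ (q ++ wpow v j ++ w') = u ++ wpow v (i + 1 + j) ++ w' := by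
  have h1 : wpow v (i + 1 + j) = wpow v i ++ (v ++ wpow v j) := by
    rw [show i + 1 + j = i + (j + 1) from by omega, wpow_add]
    congr 1
  rw [h1, hpq]
  simp [List.append_assoc]

lemma split_wpow (v w : List A) : ∀ (n : ℕ) (x y : List A), x ++ y = wpow v n ++ w →
    (∃ i p q, v = p ++ q ∧ i < n ∧ x = wpow v i ++ p ∧ y = q ++ wpow v (n-1-i) ++ w)
    ∨ (∃ w₁ w₂, w = w₁ ++ w₂ ∧ x = wpow v n ++ w₁ ∧ y = w₂) := by
  intro n
  induction n with
  | zero =>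
    intro x y h
    right
    refine ⟨x, y, ?_, by simp [wpow], rfl⟩
    simpa [wpow] using h.symm
  | succ n ih =>
    intro x y h
    have h' : x ++ y = v ++ (wpow v n ++ w) := by
      rw [h]
      show wpow v (n+1) ++ w = _
      rw [show wpow v (n+1) = v ++ wpow v n from rfl]
      simp [List.append_assoc]
    rcases List.append_eq_append_iff.mp h' with ⟨a', ha1, ha2⟩ | ⟨c', hc1, hc2⟩
    · left
      refine ⟨0, x, a', ha1, Nat.succ_pos n, by simp [wpow], ?_⟩
      rw [ha2]
      simp [List.append_assoc, show n + 1 - 1 - 0 = n from by omega]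
    · rcases ih c' y hc2.symm with ⟨i, p, q, hv, hi, hc', hy⟩ | ⟨w₁, w₂, hw, hc', hy⟩
      · left
        refine ⟨i + 1, p, q, hv, by omega, ?_, ?_⟩
        · rw [hc1, hc', show wpow v (i+1) = v ++ wpow v i from rfl]
          simp [List.append_assoc]
        · rw [hy, show n + 1 - 1 - (i + 1) = n - 1 - i from by omega]
      · right
        refine ⟨w₁, w₂, hw, ?_, hy⟩
        rw [hc1, hc', show wpow v (n+1) = v ++ wpow v n from rfl]
        simp [List.append_assoc]

lemma split_main (u v w : List A) (n : ℕ) (x y : List A) (h : x ++ y = u ++ wpow v n ++ w) :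
    (∃ u₁ u₂, u = u₁ ++ u₂ ∧ x = u₁ ∧ y = u₂ ++ wpow v n ++ w)
    ∨ (∃ i p q, v = p ++ q ∧ i < n ∧ x = u ++ wpow v i ++ p ∧ y = q ++ wpow v (n-1-i) ++ w)
    ∨ (∃ w₁ w₂, w = w₁ ++ w₂ ∧ x = u ++ wpow v n ++ w₁ ∧ y = w₂) := by
  have h' : x ++ y = u ++ (wpow v n ++ w) := by rw [h]; simp [List.append_assoc]
  rcases List.append_eq_append_iff.mp h' with ⟨a', ha1, ha2⟩ | ⟨c', hc1, hc2⟩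
  · exact Or.inl ⟨x, a', ha1, rfl, by rw [ha2]; simp [List.append_assoc]⟩
  · rcases split_wpow v w _ c' y hc2.symm with ⟨i, p, q, hv, hi, hc', hy⟩ | ⟨w₁, w₂, hw, hc', hy⟩
    · exact Or.inr (Or.inl ⟨i, p, q, hv, hi, by rw [hc1, hc']; simp [List.append_assoc], hy⟩)
    · exact Or.inr (Or.inr ⟨w₁, w₂, hw, by rw [hc1, hc']; simp [List.append_assoc], hy⟩)

lemma forward {L : Language A} (h : StarFree L) :
    ∃ N : ℕ, ∀ n > N, ∀ u v w : List A,
      (u ++ wpow v n ++ w ∈ L ↔ u ++ wpow v (n + 1) ++ w ∈ L) := by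
  induction h with
  | finite L hL =>
    obtain ⟨N, hN⟩ : ∃ N, ∀ x ∈ L, x.length ≤ N := by
      obtain ⟨N, hN⟩ := (hL.image List.length).bddAbove
      exact ⟨N, fun x hx => hN (Set.mem_image_of_mem _ hx)⟩
    refine ⟨N, fun n hn u v w => ?_⟩
    rcases eq_or_ne v [] with rfl | hv
    · rw [wpow_nil, wpow_nil]
    · have hlen : ∀ k, n ≤ k → u ++ wpow v k ++ w ∉ L := by
        intro k hk hmem
        have h1 := hN _ hmem
        have h3 : 1 ≤ v.length := List.length_pos_iff.mpr hv
        have h4 : k ≤ k * v.length := Nat.le_mul_of_pos_right k h3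
        have h2 : u.length + (k * v.length + w.length) ≤ N := by
          simpa [length_wpow] using h1
        omega
      exact iff_of_false (hlen n le_rfl) (hlen (n+1) (Nat.le_succ n))
  | union L₁ L₂ h₁ h₂ ih₁ ih₂ =>
    obtain ⟨N₁, hN₁⟩ := ih₁
    obtain ⟨N₂, hN₂⟩ := ih₂
    refine ⟨max N₁ N₂, fun n hn u v w => ?_⟩
    have e₁ := hN₁ n (lt_of_le_of_lt (le_max_left _ _) hn) u v w
    have e₂ := hN₂ n (lt_of_le_of_lt (le_max_right _ _) hn) u v w
    show _ ∨ _ ↔ _ ∨ _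
    exact or_congr e₁ e₂
  | inter L₁ L₂ h₁ h₂ ih₁ ih₂ =>
    obtain ⟨N₁, hN₁⟩ := ih₁
    obtain ⟨N₂, hN₂⟩ := ih₂
    refine ⟨max N₁ N₂, fun n hn u v w => ?_⟩
    have e₁ := hN₁ n (lt_of_le_of_lt (le_max_left _ _) hn) u v w
    have e₂ := hN₂ n (lt_of_le_of_lt (le_max_right _ _) hn) u v w
    show _ ∧ _ ↔ _ ∧ _
    exact and_congr e₁ e₂
  | compl L h ih =>
    obtain ⟨N, hN⟩ := ih
    refine ⟨N, fun n hn u v w => ?_⟩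
    exact not_congr (hN n hn u v w)
  | concat L₁ L₂ h₁ h₂ ih₁ ih₂ =>
    obtain ⟨N₁, hN₁⟩ := ih₁
    obtain ⟨N₂, hN₂⟩ := ih₂
    refine ⟨N₁ + N₂ + 2, fun n hn u v w => ?_⟩
    constructor
    · rintro ⟨x, hx, y, hy, hxy⟩
      rcases split_main u v w n x y (by exact hxy) with
        ⟨u₁, u₂, hu, hx1, hy1⟩ | ⟨i, p, q, hv, hi, rfl, rfl⟩ | ⟨w₁, w₂, hw, hx1, hy1⟩
      · rw [hy1] at hy
        refine ⟨x, hx, u₂ ++ wpow v (n+1) ++ w, (hN₂ n (by omega) u₂ v w).mp hy, ?_⟩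
        rw [hu, hx1]
        simp [List.append_assoc]
      · set j := n - 1 - i with hj
        by_cases hiN : i > N₁
        · have heq : (u ++ wpow v (i+1) ++ p) ++ (q ++ wpow v j ++ w)
              = u ++ wpow v (n+1) ++ w := by
            have hn1 : i + 1 + 1 + j = n + 1 := by omega
            rw [assemble u p q w hv (i+1) j, hn1]
          exact ⟨u ++ wpow v (i+1) ++ p, (hN₁ i hiN u v p).mp hx,
            q ++ wpow v j ++ w, hy, heq⟩
        · have hjN : j > N₂ := by omega
          have heq : (u ++ wpow v i ++ p) ++ (q ++ wpow v (j+1) ++ w)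
              = u ++ wpow v (n+1) ++ w := by
            have hn1 : i + 1 + (j + 1) = n + 1 := by omega
            rw [assemble u p q w hv i (j+1), hn1]
          exact ⟨u ++ wpow v i ++ p, hx,
            q ++ wpow v (j+1) ++ w, (hN₂ j hjN q v w).mp hy, heq⟩
      · rw [hx1] at hx
        refine ⟨u ++ wpow v (n+1) ++ w₁, (hN₁ n (by omega) u v w₁).mp hx, y, hy, ?_⟩
        rw [hw, hy1]
        simp [List.append_assoc]
    · rintro ⟨x, hx, y, hy, hxy⟩
      rcases split_main u v w (n+1) x y (by exact hxy) with
        ⟨u₁, u₂, hu, hx1, hy1⟩ | ⟨i, p, q, hv, hi, rfl, rfl⟩ | ⟨w₁, w₂, hw, hx1, hy1⟩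
      · rw [hy1] at hy
        refine ⟨x, hx, u₂ ++ wpow v n ++ w, (hN₂ n (by omega) u₂ v w).mpr hy, ?_⟩
        rw [hu, hx1]
        simp [List.append_assoc]
      · set j := n + 1 - 1 - i with hj
        by_cases hiN : i ≥ N₁ + 2
        · have hx' : u ++ wpow v (i-1) ++ p ∈ L₁ := by
            apply (hN₁ (i-1) (by omega) u v p).mpr
            rw [show i - 1 + 1 = i from by omega]
            exact hx
          have heq : (u ++ wpow v (i-1) ++ p) ++ (q ++ wpow v j ++ w)
              = u ++ wpow v n ++ w := by
            have hn1 : i - 1 + 1 + j = n := by omega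
            rw [assemble u p q w hv (i-1) j, hn1]
          exact ⟨u ++ wpow v (i-1) ++ p, hx', q ++ wpow v j ++ w, hy, heq⟩
        · have hjN : j ≥ N₂ + 2 := by omega
          have hy' : q ++ wpow v (j-1) ++ w ∈ L₂ := by
            apply (hN₂ (j-1) (by omega) q v w).mpr
            rw [show j - 1 + 1 = j from by omega]
            exact hy
          have heq : (u ++ wpow v i ++ p) ++ (q ++ wpow v (j-1) ++ w)
              = u ++ wpow v n ++ w := by
            have hn1 : i + 1 + (j - 1) = n := by omega
            rw [assemble u p q w hv i (j-1), hn1]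
          exact ⟨u ++ wpow v i ++ p, hx, q ++ wpow v (j-1) ++ w, hy', heq⟩
      · rw [hx1] at hx
        refine ⟨u ++ wpow v n ++ w₁, (hN₁ n (by omega) u v w₁).mpr hx, y, hy, ?_⟩
        rw [hw, hy1]
        simp [List.append_assoc]

end SFAux7
end P7
section P8
namespace SFAux8
open SFAux SFAux2 SFAux3 SFAux6 SFAux7

universe u
variable {A : Type u}

def synRel (L : Language A) (x y : List A) : Prop :=
  ∀ u v : List A, u ++ x ++ v ∈ L ↔ u ++ y ++ v ∈ L

def synSetoid (L : Language A) : Setoid (List A) :=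
  ⟨synRel L, ⟨fun _ _ _ => Iff.rfl, fun h u v => (h u v).symm,
    fun h₁ h₂ u v => (h₁ u v).trans (h₂ u v)⟩⟩

def SynM (L : Language A) : Type u := Quotient (synSetoid L)

def mk (L : Language A) (w : List A) : SynM L := Quotient.mk (synSetoid L) w

lemma synRel_append {L : Language A} {x x' y y' : List A}
    (hx : synRel L x x') (hy : synRel L y y') : synRel L (x ++ y) (x' ++ y') := by
  intro u v
  have a1 : u ++ (x ++ y) ++ v = u ++ x ++ (y ++ v) := by simp [List.append_assoc]
  have a2 : u ++ x' ++ (y ++ v) = u ++ x' ++ y ++ v := by simp [List.append_assoc]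
  have a3 : u ++ x' ++ y' ++ v = u ++ (x' ++ y') ++ v := by simp [List.append_assoc]
  rw [a1, hx u (y ++ v), a2, hy (u ++ x') v, a3]

instance instMonoidSynM (L : Language A) : Monoid (SynM L) where
  one := mk L []
  mul := Quotient.map₂ (· ++ ·) (@fun x x' hx y y' hy => synRel_append hx hy)
  mul_assoc a b c := by
    induction a using Quotient.inductionOn with | _ x =>
    induction b using Quotient.inductionOn with | _ y =>
    induction c using Quotient.inductionOn with | _ z =>
    show mk L ((x ++ y) ++ z) = mk L (x ++ (y ++ z))
    rw [List.append_assoc]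
  one_mul a := by
    induction a using Quotient.inductionOn with | _ x =>
    show mk L ([] ++ x) = mk L x
    rw [List.nil_append]
  mul_one a := by
    induction a using Quotient.inductionOn with | _ x =>
    show mk L (x ++ []) = mk L x
    rw [List.append_nil]

lemma mk_mul {L : Language A} (x y : List A) : mk L x * mk L y = mk L (x ++ y) := rfl

lemma evalW_mk {L : Language A} : ∀ w : List A, evalW (fun a => mk L [a]) w = mk L w := by
  intro w
  induction w with
  | nil => rfl
  | cons a w ih =>
    rw [evalW_cons, ih, mk_mul]
    rfl

lemma mk_pow {L : Language A} (v : List A) : ∀ k : ℕ, (mk L v) ^ k = mk L (wpow v k) := by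
  intro k
  induction k with
  | zero => rfl
  | succ k ih =>
    rw [pow_succ', ih, mk_mul]
    rfl

lemma synM_aperiodic {L : Language A} {N : ℕ}
    (hN : ∀ n > N, ∀ u v w : List A,
      (u ++ wpow v n ++ w ∈ L ↔ u ++ wpow v (n + 1) ++ w ∈ L)) :
    Aperiodic (SynM L) := by
  intro q
  induction q using Quotient.inductionOn with | _ v =>
  refine ⟨N, ?_⟩
  show (mk L v) ^ (N + 1) = (mk L v) ^ (N + 2)
  rw [mk_pow, mk_pow]
  apply Quotient.sound
  intro u w
  exact hN (N + 1) (Nat.lt_succ_self N) u v w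

lemma synM_finite {L : Language A} (hreg : L.IsRegular) : Finite (SynM L) := by
  obtain ⟨σ, hσ, dfa, haccept⟩ := hreg
  let ev : List A → (σ → σ) := fun w s => dfa.evalFrom s w
  have hmem : ∀ w : List A, w ∈ L ↔ dfa.evalFrom dfa.start w ∈ dfa.accept := by
    intro w
    rw [← haccept]
    rfl
  have hev : ∀ x y : List A, ev x = ev y → synRel L x y := by
    intro x y hxy u v
    rw [hmem, hmem, List.append_assoc, List.append_assoc,
      DFA.evalFrom_of_append, DFA.evalFrom_of_append, DFA.evalFrom_of_append,
      DFA.evalFrom_of_append]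
    show dfa.evalFrom (ev x (dfa.evalFrom dfa.start u)) v ∈ _ ↔
      dfa.evalFrom (ev y (dfa.evalFrom dfa.start u)) v ∈ _
    rw [hxy]
  have hsurj : Function.Surjective
      (fun e : Set.range ev => mk L (Classical.choose e.2)) := by
    intro q
    induction q using Quotient.inductionOn with | _ w =>
    refine ⟨⟨ev w, ⟨w, rfl⟩⟩, ?_⟩
    exact Quotient.sound (hev _ _ (Classical.choose_spec (⟨w, rfl⟩ : ∃ x, ev x = ev w)))
  exact Finite.of_surjective _ hsurj

end SFAux8
end P8


/-- A regular language `L` is star-free iff there is `N` such that for all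
`n > N` and all words `u,v,w`, `u v^n w ∈ L ↔ u v^(n+1) w ∈ L`. -/
theorem stmt1 {A : Type*} [Fintype A] (L : Language A) (hreg : L.IsRegular) :
    StarFree L ↔ ∃ N : ℕ, ∀ n > N, ∀ u v w : List A,
      (u ++ wpow v n ++ w ∈ L ↔ u ++ wpow v (n + 1) ++ w ∈ L) := by
  constructor
  · exact SFAux7.forward
  · rintro ⟨N, hN⟩
    haveI hfin : Finite (SFAux8.SynM L) := SFAux8.synM_finite hreg
    letI instF : Fintype (SFAux8.SynM L) := Fintype.ofFinite _
    have hap : SFAux3.Aperiodic (SFAux8.SynM L) := SFAux8.synM_aperiodic hN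
    set f : A → SFAux8.SynM L := fun a => SFAux8.mk L [a] with hf
    apply SFAux.sf_congr (L₁ := {w : List A | ∃ m ∈ {m : SFAux8.SynM L | ∃ x ∈ L, SFAux8.mk L x = m},
      w ∈ SFAux2.Lang (Finset.univ : Finset A) f m})
    · ext w
      constructor
      · rintro ⟨m, ⟨x, hx, hmk⟩, -, hev⟩
        have h1 : SFAux8.mk L w = SFAux8.mk L x := by
          rw [hf] at hev
          rw [← SFAux8.evalW_mk w, hev, hmk]
        have h2 : SFAux8.synRel L w x := Quotient.exact h1
        have h3 := h2 [] []
        simpa using h3.mpr (by simpa using hx)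
      · intro hw
        refine ⟨SFAux8.mk L w, ⟨w, hw, rfl⟩, fun a _ => Finset.mem_univ a, ?_⟩
        rw [hf, SFAux8.evalW_mk w]
    · apply SFAux.sf_biUnion (Set.toFinite _)
      intro m _
      exact SFAux6.key (Fintype.card (SFAux8.SynM L)) A (SFAux8.SynM L)
        inferInstance instF inferInstance le_rfl hap f Finset.univ m
end

section
/- If a regular language L over a finite alphabet A is not star-free, then there exist fixed words u, v, w in A* such that for every N in the natural numbers there exists n > N with u v^n w in L but u v^(n+1) w not in L. -/
section SFUtil
variable {A : Type*}

lemma sf_bot : StarFree (⊥ : Language A) := StarFree.finite _ Set.finite_empty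

lemma sf_top : StarFree (⊤ : Language A) := by
  have h := StarFree.compl _ (sf_bot (A := A))
  rwa [compl_bot] at h

lemma sf_singleton (x : List A) : StarFree ({x} : Language A) :=
  StarFree.finite _ (Set.finite_singleton _)

lemma sf_finsetSup {ι : Type*} (s : Finset ι) (f : ι → Language A)
    (h : ∀ i ∈ s, StarFree (f i)) : StarFree (s.sup f) := by
  classical
  induction s using Finset.induction_on with
  | empty => simpa using sf_bot
  | @insert a s hni ih =>
    rw [Finset.sup_insert]
    exact StarFree.union _ _ (h _ (Finset.mem_insert_self _ _))
      (ih fun i hi => h i (Finset.mem_insert_of_mem hi))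

lemma mem_lang_iSup {ι : Type*} {f : ι → Language A} {x : List A} :
    x ∈ (⨆ i, f i) ↔ ∃ i, x ∈ f i :=
  Set.mem_iUnion

lemma sf_iSup {ι : Type*} [Fintype ι] (f : ι → Language A)
    (h : ∀ i, StarFree (f i)) : StarFree (⨆ i, f i) := by
  have he : Finset.univ.sup f = ⨆ i, f i := by
    rw [Finset.sup_eq_iSup]
    exact le_antisymm (iSup₂_le fun i _ => le_iSup f i)
      (iSup_le fun i => le_iSup₂ (f := fun i _ => f i) i (Finset.mem_univ i))
  rw [← he]
  exact sf_finsetSup _ _ fun i _ => h i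

lemma mem_top_mul_mul_top (X : Language A) (x : List A) :
    x ∈ (⊤ : Language A) * X * (⊤ : Language A) ↔ ∃ y u z, u ∈ X ∧ x = y ++ u ++ z := by
  constructor
  · rintro h
    rw [Language.mem_mul] at h
    obtain ⟨c, hc, d, -, rfl⟩ := h
    rw [Language.mem_mul] at hc
    obtain ⟨y, -, u, hu, rfl⟩ := hc
    exact ⟨y, u, d, hu, rfl⟩
  · rintro ⟨y, u, z, hu, rfl⟩
    exact Language.append_mem_mul (Language.append_mem_mul trivial hu) trivial

lemma first_prefix {P : List A → Prop} (h0 : ¬ P []) :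
    ∀ w, P w → ∃ p a s, w = p ++ a :: s ∧ ¬ P p ∧ P (p ++ [a]) := by
  intro w
  induction w using List.reverseRecOn with
  | nil => intro hw; exact absurd hw h0
  | append_singleton t a ih =>
    intro hw
    by_cases ht : P t
    · obtain ⟨p, a', s, rfl, h1, h2⟩ := ih ht
      exact ⟨p, a', s ++ [a], by simp, h1, h2⟩
    · exact ⟨t, a, [], by simp, ht, hw⟩

lemma first_suffix {P : List A → Prop} (h0 : ¬ P []) :
    ∀ w, P w → ∃ p a s, w = p ++ a :: s ∧ ¬ P s ∧ P (a :: s) := by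
  intro w
  induction w with
  | nil => intro hw; exact absurd hw h0
  | cons a t ih =>
    intro hw
    by_cases ht : P t
    · obtain ⟨p, a', s, rfl, h1, h2⟩ := ih ht
      exact ⟨a :: p, a', s, by simp, h1, h2⟩
    · exact ⟨[], a, t, by simp, ht, hw⟩

end SFUtil

def JLE {M : Type*} [Monoid M] (x y : M) : Prop := ∃ p q, x = p * y * q

lemma jle_refl {M : Type*} [Monoid M] (x : M) : JLE x x := ⟨1, 1, by simp⟩

lemma jle_trans {M : Type*} [Monoid M] {x y z : M} (h1 : JLE x y) (h2 : JLE y z) :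
    JLE x z := by
  obtain ⟨p, q, rfl⟩ := h1
  obtain ⟨p', q', rfl⟩ := h2
  exact ⟨p * p', q' * q, by simp [mul_assoc]⟩

lemma now_key {A : Type*} {M : Type*} [Monoid M] (φ : List A → M) (hnil : φ [] = 1)
    (happ : ∀ x y, φ (x ++ y) = φ x * φ y) (m : M) :
    ∀ (w : List A),
      (∀ (x : List A) (a : A) (y : List A), w = x ++ a :: y → JLE m (φ [a])) →
      (∀ (x : List A) (a : A) (v : List A) (b : A) (y : List A),
        w = x ++ a :: (v ++ b :: y) → JLE m (φ (a :: v)) → JLE m (φ (v ++ [b])) →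
        JLE m (φ ((a :: v) ++ [b]))) →
      JLE m (φ w) := by
  suffices aux : ∀ (n : ℕ) (w : List A), w.length = n →
      (∀ (x : List A) (a : A) (y : List A), w = x ++ a :: y → JLE m (φ [a])) →
      (∀ (x : List A) (a : A) (v : List A) (b : A) (y : List A),
        w = x ++ a :: (v ++ b :: y) → JLE m (φ (a :: v)) → JLE m (φ (v ++ [b])) →
        JLE m (φ ((a :: v) ++ [b]))) →
      JLE m (φ w) by
    exact fun w => aux w.length w rfl
  intro n
  induction n using Nat.strong_induction_on with
  | _ n IH =>
  intro w hn hlet htri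
  rcases w with _ | ⟨a, t⟩
  · exact ⟨m, 1, by simp [hnil]⟩
  rcases t with _ | ⟨t0, ts⟩
  · exact hlet [] a [] rfl
  · obtain ⟨v, b, hvb⟩ : ∃ v b, t0 :: ts = v ++ [b] := by
      rcases List.eq_nil_or_concat (t0 :: ts) with h | ⟨L, b, h⟩
      · simp at h
      · exact ⟨L, b, by simpa [List.concat_eq_append] using h⟩
    have hw : a :: t0 :: ts = a :: (v ++ [b]) := by rw [hvb]
    have hn1 : (v ++ [b]).length = n - 1 := by
      rw [← hvb]; simp only [List.length_cons] at hn ⊢; omega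
    have hnge : 2 ≤ n := by simp only [List.length_cons] at hn; omega
    have hlen1 : (a :: v).length < n := by
      simp only [List.length_append, List.length_cons, ] at hn1 ⊢; omega
    have hlen2 : (v ++ [b]).length < n := by omega
    have h1 : JLE m (φ (a :: v)) := by
      apply IH _ hlen1 (a :: v) rfl
      · intro x a' y he
        apply hlet x a' (y ++ [b])
        rw [hw, show a :: (v ++ [b]) = (a :: v) ++ [b] by simp, he]
        simp
      · intro x a' v' b' y he ha hb
        apply htri x a' v' b' (y ++ [b]) ?_ ha hb
        rw [hw, show a :: (v ++ [b]) = (a :: v) ++ [b] by simp, he]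
        simp
    have h2 : JLE m (φ (v ++ [b])) := by
      apply IH _ hlen2 (v ++ [b]) rfl
      · intro x a' y he
        apply hlet (a :: x) a' y
        rw [hw, he]
        simp
      · intro x a' v' b' y he ha hb
        apply htri (a :: x) a' v' b' y ?_ ha hb
        rw [hw, he]
        simp
    have h3 := htri [] a v b [] (by rw [hw]; simp) h1 h2
    have heq : ((a :: v) ++ [b]) = a :: t0 :: ts := by rw [hw]; simp
    rwa [heq] at h3


section MonoidLemmas
variable {M : Type*} [Monoid M]

lemma pow_stab {x : M} {a p : ℕ} (h : x ^ a = x ^ (a + p)) :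
    ∀ n, a ≤ n → ∀ t, x ^ n = x ^ (n + t * p) := by
  have step : ∀ n, a ≤ n → x ^ n = x ^ (n + p) := by
    intro n hn
    obtain ⟨d, rfl⟩ := Nat.exists_eq_add_of_le hn
    rw [pow_add, h, ← pow_add]; congr 1; ring
  intro n hn t
  induction t with
  | zero => simp
  | succ t ih =>
    rw [ih, step (n + t * p) (by omega)]; congr 1; ring

/-- In a finite monoid, some positive power of every element is idempotent. -/
lemma fin_exists_idem [Finite M] (x : M) : ∃ k, 1 ≤ k ∧ x ^ k * x ^ k = x ^ k := by
  obtain ⟨i, j, hne, hij⟩ := Finite.exists_ne_map_eq_of_infinite (fun n : ℕ => x ^ (n + 1))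
  wlog hlt : i < j generalizing i j
  · exact this j i hne.symm hij.symm (by omega)
  set a := i + 1
  set p := j - i with hp
  have ha : x ^ a = x ^ (a + p) := by rw [hij]; congr 1; omega
  have key := pow_stab ha
  refine ⟨a * p, Nat.one_le_iff_ne_zero.mpr (by simp [hp]; omega), ?_⟩
  rw [← pow_add]
  exact (key (a * p) (Nat.le_mul_of_pos_right a (by omega)) a).symm

end MonoidLemmas

section Aperiodic
variable {M : Type*} [Monoid M] [Finite M]

lemma iter_sandwich {y p q : M} (h : y = p * y * q) : ∀ n, y = p ^ n * y * q ^ n := by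
  intro n
  induction n with
  | zero => simp
  | succ n ih =>
    calc y = p * y * q := h
    _ = p * (p ^ n * y * q ^ n) * q := by rw [← ih]
    _ = p ^ (n+1) * y * q ^ (n+1) := by
        rw [pow_succ q, pow_succ' p]; simp only [mul_assoc]

/-- R-stability: if x ≤_R y and y ≤_J x then y ≤_R x. -/
lemma stab_r {x y : M} (h1 : ∃ u, x = y * u) (h2 : ∃ p q, y = p * x * q) :
    ∃ r, y = x * r := by
  obtain ⟨u, rfl⟩ := h1
  obtain ⟨p, q, hy⟩ := h2
  have hy' : y = p * y * (u * q) := by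
    conv_lhs => rw [hy]
    simp only [mul_assoc]
  obtain ⟨k, hk1, hkidem⟩ := fin_exists_idem (u * q)
  have h3 : y = p ^ k * y * (u * q) ^ k := iter_sandwich hy' k
  have h4 : y * (u * q) ^ k = y := by
    conv_lhs => rw [h3]
    rw [mul_assoc, hkidem, ← h3]
  refine ⟨q * (u * q) ^ (k - 1), ?_⟩
  have hsplit : (u * q) ^ k = u * (q * (u * q) ^ (k - 1)) := by
    conv_lhs => rw [show k = 1 + (k - 1) by omega]
    rw [pow_add, pow_one]; simp only [mul_assoc]
  have h5 : y = y * ((u * q) ^ k) := h4.symm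
  rw [hsplit] at h5
  simp only [mul_assoc] at h5 ⊢
  exact h5

/-- L-stability: if x ≤_L y and y ≤_J x then y ≤_L x. -/
lemma stab_l {x y : M} (h1 : ∃ u, x = u * y) (h2 : ∃ p q, y = p * x * q) :
    ∃ r, y = r * x := by
  obtain ⟨u, rfl⟩ := h1
  obtain ⟨p, q, hy⟩ := h2
  have hy' : y = (p * u) * y * q := by
    conv_lhs => rw [hy]
    simp only [mul_assoc]
  obtain ⟨k, hk1, hkidem⟩ := fin_exists_idem (p * u)
  have h3 : y = (p * u) ^ k * y * q ^ k := iter_sandwich hy' k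
  have h4 : (p * u) ^ k * y = y := by
    conv_lhs => rw [h3]
    rw [show (p*u)^k * ((p*u)^k * y * q^k) = ((p*u)^k * (p*u)^k) * y * q ^ k by noncomm_ring,
      hkidem, ← h3]
  refine ⟨(p * u) ^ (k - 1) * p, ?_⟩
  have hsplit : (p * u) ^ k = (p * u) ^ (k - 1) * (p * u) := by
    conv_lhs => rw [show k = (k - 1) + 1 by omega]
    rw [pow_add, pow_one]
  have h5 : y = (p * u) ^ k * y := h4.symm
  rw [hsplit] at h5
  simp only [mul_assoc] at h5 ⊢
  exact h5

variable (hap : ∀ x : M, ∃ k, 1 ≤ k ∧ x ^ k = x ^ (k + 1))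
include hap

lemma unit_right {p s : M} (h : p * s = 1) : s = 1 := by
  obtain ⟨i, j, hne, hij⟩ := Finite.exists_ne_map_eq_of_infinite (fun n : ℕ => s ^ (n + 1))
  wlog hlt : i < j generalizing i j
  · exact this j i hne.symm hij.symm (by omega)
  have hpows : ∀ n, p ^ n * s ^ n = 1 := by
    intro n
    induction n with
    | zero => simp
    | succ n ih =>
      rw [pow_succ p, pow_succ' s, mul_assoc, ← mul_assoc p, h, one_mul, ih]
  have hd : s ^ (j - i) = 1 := by
    have e1 : (1 : M) = p ^ (i+1) * s ^ (j+1) := by rw [← hij]; exact (hpows (i+1)).symm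
    have e2 : s ^ (j+1) = s ^ (i+1) * s ^ (j - i) := by rw [← pow_add]; congr 1; omega
    have e3 : (1 : M) = s ^ (j - i) := by
      rw [e1, e2, ← mul_assoc, hpows (i+1), one_mul]
    exact e3.symm
  set d := j - i with hdd
  have hd1 : 1 ≤ d := by omega
  obtain ⟨k, hk1, hk⟩ := hap s
  have hall : ∀ n, k ≤ n → s ^ n = s ^ (n + 1) := by
    intro n hn
    obtain ⟨c, rfl⟩ := Nat.exists_eq_add_of_le hn
    rw [show k + c + 1 = (k + 1) + c by ring, pow_add, pow_add, hk]
  have hkd : s ^ (k * d) = 1 := by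
    rw [show k * d = d * k by ring, pow_mul, hd, one_pow]
  have : s ^ (k * d) = s ^ (k * d + 1) := hall (k * d) (Nat.le_mul_of_pos_right k (by omega))
  rw [hkd, pow_succ, hkd, one_mul] at this
  exact this.symm

lemma middle_unit {p t q : M} (h : p * t * q = 1) : t = 1 := by
  have h1 : p * (t * q) = 1 := by rw [← mul_assoc]; exact h
  have h2 : t * q = 1 := unit_right hap h1
  have h3 : q = 1 := unit_right hap h2
  rw [h3, mul_one] at h2
  exact h2

/-- Aperiodic finite monoids are H-trivial. -/
lemma h_triv {x y : M} (h1 : ∃ u, y = x * u) (h2 : ∃ u, x = y * u)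
    (h3 : ∃ v, y = v * x) (h4 : ∃ v, x = v * y) : x = y := by
  obtain ⟨u, hu⟩ := h1
  obtain ⟨v, hv⟩ := h4
  have hx : x = v * x * u := by rw [mul_assoc, ← hu, ← hv]
  obtain ⟨k, hk1, hk⟩ := hap u
  have h5 : x = v ^ k * x * u ^ k := iter_sandwich hx k
  have h6 : x = v ^ k * x * u ^ (k + 1) := by rw [← hk]; exact h5
  have h7 : x = x * u := by
    conv_lhs => rw [h6]
    rw [pow_succ, ← mul_assoc, ← h5]
  rw [hu, ← h7]

end Aperiodic

theorem schutz {A : Type*} [Fintype A] {M : Type*} [Monoid M] [Finite M]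
    (hap : ∀ x : M, ∃ k, 1 ≤ k ∧ x ^ k = x ^ (k + 1))
    (φ : List A → M) (hnil : φ [] = 1) (happ : ∀ x y, φ (x ++ y) = φ x * φ y) :
    ∀ m : M, StarFree {x : List A | φ x = m} := by
  classical
  have hcons : ∀ (a : A) (t : List A), φ (a :: t) = φ [a] * φ t := fun a t => by
    rw [show a :: t = [a] ++ t from rfl, happ]
  suffices key : ∀ (N : ℕ) (m : M), {s : M | JLE m s}.ncard ≤ N →
      StarFree {x : List A | φ x = m} by
    intro m; exact key _ m le_rfl
  intro N
  induction N with
  | zero =>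
    intro m hm
    exfalso
    have h0 : {s : M | JLE m s} = ∅ :=
      (Set.ncard_eq_zero (Set.toFinite _)).mp (Nat.le_zero.mp hm)
    have hmem : m ∈ {s : M | JLE m s} := jle_refl m
    rw [h0] at hmem
    exact Set.notMem_empty m hmem
  | succ N ih =>
    intro m hm
    by_cases hm1 : m = 1
    · -- the case m = 1
      subst hm1
      set Bad : Language A :=
        ⨆ a : A, if φ [a] = 1 then (⊥ : Language A) else ⊤ * {[a]} * ⊤ with hBad
      have hsf : StarFree Bad := by
        apply sf_iSup
        intro a
        by_cases h : φ [a] = 1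
        · rw [if_pos h]; exact sf_bot
        · rw [if_neg h]
          exact StarFree.concat _ _ (StarFree.concat _ _ sf_top (sf_singleton _)) sf_top
      have hall : ∀ x : List A, x ∉ Bad → φ x = 1 := by
        intro x
        induction x with
        | nil => intro _; exact hnil
        | cons a t iht =>
          intro hnb
          have ha : φ [a] = 1 := by
            by_contra h
            apply hnb
            rw [hBad, mem_lang_iSup]
            refine ⟨a, ?_⟩
            rw [if_neg h, mem_top_mul_mul_top]
            exact ⟨[], [a], t, rfl, by simp⟩
          have hnt : t ∉ Bad := by
            intro hbad
            apply hnb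
            rw [hBad, mem_lang_iSup] at hbad ⊢
            obtain ⟨a', ha'⟩ := hbad
            refine ⟨a', ?_⟩
            by_cases h : φ [a'] = 1
            · rw [if_pos h] at ha'; exact ha'.elim
            · rw [if_neg h] at ha' ⊢
              rw [mem_top_mul_mul_top] at ha' ⊢
              obtain ⟨y, u, z, hu, rfl⟩ := ha'
              exact ⟨a :: y, u, z, hu, by simp⟩
          rw [hcons, ha, iht hnt, one_mul]
      have heq : {x : List A | φ x = 1} = Badᶜ := by
        ext x
        simp only [Set.mem_setOf_eq, Set.mem_compl_iff]
        constructor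
        · intro hx hbad
          change x ∈ (Bad : Language A) at hbad
          rw [hBad, mem_lang_iSup] at hbad
          obtain ⟨a, ha⟩ := hbad
          by_cases h : φ [a] = 1
          · rw [if_pos h] at ha; exact ha.elim
          · rw [if_neg h, mem_top_mul_mul_top] at ha
            obtain ⟨y, u, z, hu, rfl⟩ := ha
            change u = [a] at hu
            subst hu
            apply h
            have h2 : φ y * φ [a] * φ z = 1 := by
              rw [← happ, ← happ]; exact hx
            exact middle_unit hap h2
        · exact hall x
      rw [heq]
      exact StarFree.compl _ hsf
    · -- main case : m ≠ 1
      have IHstep : ∀ n : M, JLE m n → ¬ JLE n m → StarFree {x : List A | φ x = n} := by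
        intro n h1 h2
        apply ih
        have hsub : {s : M | JLE n s} ⊆ {s : M | JLE m s} := fun s hs => jle_trans h1 hs
        have hss : {s : M | JLE n s} ⊂ {s : M | JLE m s} :=
          (Set.ssubset_iff_of_subset hsub).mpr ⟨m, jle_refl m, h2⟩
        have hlt := Set.ncard_lt_ncard hss (Set.toFinite _)
        omega
      have hFM : Fintype M := Fintype.ofFinite M
      -- the three auxiliary languages
      set Phi : M → Language A := fun n => {x : List A | φ x = n} with hPhi
      set PU : M × A → Prop := fun p =>
        (∃ u, p.1 * φ [p.2] = m * u) ∧ (∃ u, m = p.1 * φ [p.2] * u) ∧ ¬ ∃ u, p.1 = m * u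
        with hPU
      set LU : Language A :=
        ⨆ p : M × A, if PU p then Phi p.1 * {[p.2]} else ⊥
        with hLU
      set PV : A × M → Prop := fun p =>
        (∃ u, φ [p.1] * p.2 = u * m) ∧ (∃ u, m = u * (φ [p.1] * p.2)) ∧ ¬ ∃ u, p.2 = u * m
        with hPV
      set LV : Language A :=
        ⨆ p : A × M, if PV p then ({[p.1]} : Language A) * Phi p.2 else ⊥
        with hLV
      set PW : A × M × A → Prop := fun p =>
        JLE m (φ [p.1] * p.2.1) ∧ JLE m (p.2.1 * φ [p.2.2]) ∧
          ¬ JLE m (φ [p.1] * p.2.1 * φ [p.2.2])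
        with hPW
      set LW1 : Language A := ⨆ a : A, if JLE m (φ [a]) then (⊥ : Language A) else {[a]}
        with hLW1
      set LW2 : Language A :=
        ⨆ p : A × M × A, if PW p then
          ({[p.1]} : Language A) * Phi p.2.1 * {[p.2.2]} else ⊥
        with hLW2
      -- star-freeness of the pieces
      have hsfLU : StarFree LU := by
        apply sf_iSup
        rintro ⟨n, a⟩
        by_cases h : PU (n, a)
        · rw [if_pos h]
          simp only [hPU] at h
          obtain ⟨⟨u1, hu1⟩, ⟨u2, hu2⟩, h3⟩ := h
          have hjm : JLE m n := ⟨1, φ [a] * u2, by rw [one_mul, ← mul_assoc]; exact hu2⟩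
          have hnj : ¬ JLE n m := by
            rintro ⟨p', q', he⟩
            exact h3 (stab_r ⟨φ [a] * u2, by rw [← mul_assoc]; exact hu2⟩ ⟨p', q', he⟩)
          exact StarFree.concat _ _ (IHstep n hjm hnj) (sf_singleton _)
        · rw [if_neg h]; exact sf_bot
      have hsfLV : StarFree LV := by
        apply sf_iSup
        rintro ⟨a, n⟩
        by_cases h : PV (a, n)
        · rw [if_pos h]
          simp only [hPV] at h
          obtain ⟨⟨u1, hu1⟩, ⟨u2, hu2⟩, h3⟩ := h
          have hjm : JLE m n := ⟨u2 * φ [a], 1, by rw [mul_one, mul_assoc]; exact hu2⟩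
          have hnj : ¬ JLE n m := by
            rintro ⟨p', q', he⟩
            exact h3 (stab_l ⟨u2 * φ [a], by rw [mul_assoc]; exact hu2⟩ ⟨p', q', he⟩)
          exact StarFree.concat _ _ (sf_singleton _) (IHstep n hjm hnj)
        · rw [if_neg h]; exact sf_bot
      have hsfLW1 : StarFree LW1 := by
        apply sf_iSup
        intro a
        by_cases h : JLE m (φ [a])
        · rw [if_pos h]; exact sf_bot
        · rw [if_neg h]; exact sf_singleton _
      have hsfLW2 : StarFree LW2 := by
        apply sf_iSup
        rintro ⟨a, n, b⟩
        by_cases h : PW (a, n, b)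
        · rw [if_pos h]
          simp only [hPW] at h
          obtain ⟨⟨p1, q1, he1⟩, ⟨p2, q2, he2⟩, h3⟩ := h
          have hjm : JLE m n := ⟨p1 * φ [a], q1, by simp only [mul_assoc]; simpa [mul_assoc] using he1⟩
          have hnj : ¬ JLE n m := by
            rintro ⟨c, d, he⟩
            have hn2 : ∃ p q, n = p * (φ [a] * n) * q :=
              ⟨c * p1, q1 * d, by
                conv_lhs => rw [he, he1]
                simp only [mul_assoc]⟩
            obtain ⟨r, hr⟩ := stab_l (x := φ [a] * n) (y := n) ⟨φ [a], rfl⟩ hn2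
            apply h3
            refine ⟨p2 * r, q2, ?_⟩
            rw [he2]
            conv_lhs => rw [hr]
            simp only [mul_assoc]
          exact StarFree.concat _ _
            (StarFree.concat _ _ (sf_singleton _) (IHstep n hjm hnj)) (sf_singleton _)
        · rw [if_neg h]; exact sf_bot
      -- the main set-theoretic identity
      have main : {x : List A | φ x = m} =
          ((LU * ⊤ ⊓ ⊤ * LV) ⊓ ((⊤ : Language A) * (LW1 ⊔ LW2) * ⊤)ᶜ) := by
        ext x
        simp only [Set.mem_setOf_eq]
        constructor
        · intro hx
          refine ⟨⟨?_, ?_⟩, ?_⟩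
          · -- x ∈ LU * ⊤
            have hP0 : ¬ ∃ u : M, φ [] = m * u := by
              rintro ⟨u, hu⟩
              rw [hnil] at hu
              have hu1 : u = 1 := unit_right hap hu.symm
              rw [hu1, mul_one] at hu
              exact hm1 hu.symm
            obtain ⟨p, a, s, hxe, hnp, hpa⟩ :=
              first_prefix (P := fun p => ∃ u, φ p = m * u) hP0 x ⟨1, by rw [hx, mul_one]⟩
            change x ∈ (LU * ⊤ : Language A)
            rw [Language.mem_mul]
            refine ⟨p ++ [a], ?_, s, trivial, by simp [hxe]⟩
            rw [hLU, mem_lang_iSup]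
            refine ⟨(φ p, a), ?_⟩
            have hcond : PU (φ p, a) := by
              simp only [hPU]
              refine ⟨?_, ?_, hnp⟩
              · obtain ⟨u, hu⟩ := hpa
                exact ⟨u, by rw [← happ]; exact hu⟩
              · refine ⟨φ s, ?_⟩
                rw [← hx, hxe, show p ++ a :: s = (p ++ [a]) ++ s by simp, happ, happ]
            rw [if_pos hcond]
            exact Language.append_mem_mul rfl rfl
          · -- x ∈ ⊤ * LV
            have hP0 : ¬ ∃ u : M, φ [] = u * m := by
              rintro ⟨u, hu⟩
              rw [hnil] at hu
              exact hm1 (unit_right hap hu.symm)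
            obtain ⟨p, a, s, hxe, hns, has⟩ :=
              first_suffix (P := fun s => ∃ u, φ s = u * m) hP0 x ⟨1, by rw [hx, one_mul]⟩
            change x ∈ (⊤ * LV : Language A)
            rw [Language.mem_mul]
            refine ⟨p, trivial, a :: s, ?_, by rw [hxe]⟩
            rw [hLV, mem_lang_iSup]
            refine ⟨(a, φ s), ?_⟩
            have hcond : PV (a, φ s) := by
              simp only [hPV]
              refine ⟨?_, ?_, hns⟩
              · obtain ⟨u, hu⟩ := has
                exact ⟨u, by rw [← hcons]; exact hu⟩
              · refine ⟨φ p, ?_⟩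
                rw [← hx, hxe, show p ++ a :: s = p ++ ([a] ++ s) by simp, happ, happ]
            rw [if_pos hcond]
            exact Language.append_mem_mul (show [a] ∈ ({[a]} : Language A) from rfl)
              (show s ∈ Phi (φ s) from rfl)
          · -- x ∉ ⊤ * (LW1 ⊔ LW2) * ⊤
            intro hc
            change x ∈ ((⊤ : Language A) * (LW1 ⊔ LW2) * ⊤) at hc
            rw [mem_top_mul_mul_top] at hc
            obtain ⟨y, u, z, hu, hxe⟩ := hc
            have hu' : u ∈ LW1 ∨ u ∈ LW2 := hu
            rcases hu' with hu1 | hu2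
            · rw [hLW1, mem_lang_iSup] at hu1
              obtain ⟨a, ha⟩ := hu1
              by_cases h : JLE m (φ [a])
              · rw [if_pos h] at ha; exact ha.elim
              · rw [if_neg h] at ha
                change u = [a] at ha
                subst ha
                apply h
                refine ⟨φ y, φ z, ?_⟩
                rw [← hx, hxe, happ, happ]
            · rw [hLW2, mem_lang_iSup] at hu2
              obtain ⟨⟨a, n, b⟩, hmem⟩ := hu2
              by_cases h : PW (a, n, b)
              · rw [if_pos h] at hmem
                simp only [hPW] at h
                rw [Language.mem_mul] at hmem
                obtain ⟨c, hcmem, d, hd, hcd⟩ := hmem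
                rw [Language.mem_mul] at hcmem
                obtain ⟨e, he, f, hf, hef⟩ := hcmem
                change e = [a] at he; change d = [b] at hd
                subst he hd
                have hfn : φ f = n := hf
                apply h.2.2
                refine ⟨φ y, φ z, ?_⟩
                rw [← hfn, ← hx, hxe, ← hcd, ← hef]
                simp only [happ, mul_assoc]
              · rw [if_neg h] at hmem; exact hmem.elim
        · rintro ⟨⟨h1, h2⟩, h3⟩
          -- extract φ x ∈ m M
          have hR : ∃ u, φ x = m * u := by
            change x ∈ (LU * ⊤ : Language A) at h1
            rw [Language.mem_mul] at h1
            obtain ⟨c, hc, d, -, hcd⟩ := h1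
            rw [hLU, mem_lang_iSup] at hc
            obtain ⟨⟨n, a⟩, hcif⟩ := hc
            by_cases h : PU (n, a)
            · rw [if_pos h] at hcif
              simp only [hPU] at h
              rw [Language.mem_mul] at hcif
              obtain ⟨e, he, f, hf, hef⟩ := hcif
              change f = [a] at hf
              subst hf
              have hen : φ e = n := he
              obtain ⟨u1, hu1⟩ := h.1
              refine ⟨u1 * φ d, ?_⟩
              rw [← hcd, ← hef, happ, happ, hen]
              rw [← mul_assoc, hu1]
            · rw [if_neg h] at hcif; exact hcif.elim
          have hL : ∃ u, φ x = u * m := by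
            change x ∈ (⊤ * LV : Language A) at h2
            rw [Language.mem_mul] at h2
            obtain ⟨c, -, d, hd, hcd⟩ := h2
            rw [hLV, mem_lang_iSup] at hd
            obtain ⟨⟨a, n⟩, hdif⟩ := hd
            by_cases h : PV (a, n)
            · rw [if_pos h] at hdif
              simp only [hPV] at h
              rw [Language.mem_mul] at hdif
              obtain ⟨e, he, f, hf, hef⟩ := hdif
              change e = [a] at he
              subst he
              have hfn : φ f = n := hf
              obtain ⟨u1, hu1⟩ := h.1
              refine ⟨φ c * u1, ?_⟩
              rw [← hcd, ← hef, happ, happ, hfn, mul_assoc, hu1]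
            · rw [if_neg h] at hdif; exact hdif.elim
          have hJ : JLE m (φ x) := by
            apply now_key φ hnil happ m x
            · intro y a z hdec
              by_contra hcon
              apply h3
              change x ∈ ((⊤ : Language A) * (LW1 ⊔ LW2) * ⊤)
              rw [mem_top_mul_mul_top]
              refine ⟨y, [a], z, Or.inl ?_, by simp [hdec]⟩
              change [a] ∈ (LW1 : Language A)
              rw [hLW1, mem_lang_iSup]
              exact ⟨a, by rw [if_neg hcon]; rfl⟩
            · intro y a v b z hdec hJ1 hJ2
              by_contra hcon
              apply h3
              change x ∈ ((⊤ : Language A) * (LW1 ⊔ LW2) * ⊤)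
              rw [mem_top_mul_mul_top]
              refine ⟨y, ([a] ++ v) ++ [b], z, Or.inr ?_, by simp [hdec]⟩
              change ([a] ++ v) ++ [b] ∈ (LW2 : Language A)
              rw [hLW2, mem_lang_iSup]
              refine ⟨(a, φ v, b), ?_⟩
              have hcond : PW (a, φ v, b) := by
                simp only [hPW]
                refine ⟨?_, ?_, ?_⟩
                · rw [← hcons]; exact hJ1
                · rw [show φ v * φ [b] = φ (v ++ [b]) by rw [happ]]; exact hJ2
                · intro hcon'
                  apply hcon
                  rw [show φ ((a :: v) ++ [b]) = φ [a] * φ v * φ [b] by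
                    rw [happ, hcons]]
                  exact hcon'
              rw [if_pos hcond]
              exact Language.append_mem_mul (Language.append_mem_mul rfl rfl) rfl
          obtain ⟨pj, qj, hpq⟩ := hJ
          have hR' : ∃ r, m = φ x * r := stab_r hR ⟨pj, qj, hpq⟩
          have hL' : ∃ r, m = r * φ x := stab_l hL ⟨pj, qj, hpq⟩
          exact h_triv hap hR' hR hL' hL
      rw [main]
      exact StarFree.inter _ _
        (StarFree.inter _ _ (StarFree.concat _ _ hsfLU sf_top)
          (StarFree.concat _ _ sf_top hsfLV))
        (StarFree.compl _
          (StarFree.concat _ _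
            (StarFree.concat _ _ sf_top (StarFree.union _ _ hsfLW1 hsfLW2)) sf_top))

lemma wpow_succ' {A : Type*} (v : List A) (n : ℕ) : wpow v (n + 1) = v ++ wpow v n := rfl

lemma toList_pow {A : Type*} (x : FreeMonoid A) :
    ∀ n : ℕ, FreeMonoid.toList (x ^ n) = wpow (FreeMonoid.toList x) n := by
  intro n
  induction n with
  | zero => rw [pow_zero, FreeMonoid.toList_one]; rfl
  | succ n ih => rw [pow_succ', FreeMonoid.toList_mul, ih]; rfl


/-- If a regular language `L` is not star-free, then there are fixed words
`u,v,w` such that for every `N` there is `n > N` with `u v^n w ∈ L` but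
`u v^(n+1) w ∉ L`. -/
theorem stmt2 {A : Type*} [Fintype A] (L : Language A) (hreg : L.IsRegular)
    (h : ¬ StarFree L) :
    ∃ u v w : List A, ∀ N : ℕ, ∃ n > N,
      u ++ wpow v n ++ w ∈ L ∧ u ++ wpow v (n + 1) ++ w ∉ L := by
  classical
  by_contra hcon
  push_neg at hcon
  apply h
  obtain ⟨σ, hσ, D, hD⟩ := hreg
  haveI := hσ
  haveI hFinEnd : Finite (Function.End σ) := inferInstanceAs (Finite (σ → σ))
  -- transition function of a word
  set T : List A → Function.End σ := fun x q => D.evalFrom q x with hT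
  have hkey : ∀ x y : List A, T x = T y → ∀ u w : List A,
      (u ++ x ++ w ∈ L ↔ u ++ y ++ w ∈ L) := by
    have hmem : ∀ z u w : List A,
        (u ++ z ++ w ∈ L ↔ D.evalFrom (T z (D.eval u)) w ∈ D.accept) := by
      intro z u w
      rw [← hD, DFA.mem_accepts]
      have : D.eval (u ++ z ++ w) = D.evalFrom (T z (D.eval u)) w := by
        rw [DFA.eval, DFA.evalFrom_of_append, DFA.evalFrom_of_append]
      rw [this]
    intro x y hxy u w
    rw [hmem x u w, hmem y u w, hxy]
  -- the syntactic congruence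
  set c : Con (FreeMonoid A) :=
    { r := fun x y => ∀ u w : List A,
        (u ++ FreeMonoid.toList x ++ w ∈ L ↔ u ++ FreeMonoid.toList y ++ w ∈ L)
      iseqv := ⟨fun _ _ _ => Iff.rfl, fun h u w => (h u w).symm,
        fun h1 h2 u w => (h1 u w).trans (h2 u w)⟩
      mul' := by
        intro a b a' b' hab hab' u w
        have e1 : ∀ z z' : FreeMonoid A,
            u ++ FreeMonoid.toList (z * z') ++ w =
              u ++ FreeMonoid.toList z ++ (FreeMonoid.toList z' ++ w) := by
          intro z z'
          rw [FreeMonoid.toList_mul]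
          simp [List.append_assoc]
        rw [e1 a a', e1 b b']
        refine (hab u (FreeMonoid.toList a' ++ w)).trans ?_
        have h3 := hab' (u ++ FreeMonoid.toList b) w
        constructor
        · intro hx
          have := (by simpa [List.append_assoc] using h3 :
            (u ++ FreeMonoid.toList b ++ (FreeMonoid.toList a' ++ w) ∈ L ↔
             u ++ FreeMonoid.toList b ++ (FreeMonoid.toList b' ++ w) ∈ L))
          exact this.mp hx
        · intro hx
          have := (by simpa [List.append_assoc] using h3 :
            (u ++ FreeMonoid.toList b ++ (FreeMonoid.toList a' ++ w) ∈ L ↔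
             u ++ FreeMonoid.toList b ++ (FreeMonoid.toList b' ++ w) ∈ L))
          exact this.mpr hx } with hc
  have hcr : ∀ x y : FreeMonoid A, c x y ↔ ∀ u w : List A,
      (u ++ FreeMonoid.toList x ++ w ∈ L ↔ u ++ FreeMonoid.toList y ++ w ∈ L) :=
    fun x y => Iff.rfl
  -- the syntactic monoid is finite
  have hTc : ∀ x y : List A, T x = T y →
      c (FreeMonoid.ofList x) (FreeMonoid.ofList y) := by
    intro x y hxy
    rw [hcr]
    intro u w
    simpa [FreeMonoid.toList_ofList] using hkey x y hxy u w
  haveI hfinQ : Finite c.Quotient := by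
    have hsurj : Function.Surjective
        (fun f : Set.range T => ((FreeMonoid.ofList f.2.choose : FreeMonoid A) :
          c.Quotient)) := by
      intro q
      induction q using Quotient.ind with
      | _ x =>
        refine ⟨⟨T (FreeMonoid.toList x), ⟨FreeMonoid.toList x, rfl⟩⟩, ?_⟩
        have hch := (⟨FreeMonoid.toList x, rfl⟩ :
          ∃ y, T y = T (FreeMonoid.toList x)).choose_spec
        have : c (FreeMonoid.ofList (⟨FreeMonoid.toList x, rfl⟩ :
            ∃ y, T y = T (FreeMonoid.toList x)).choose) x := by
          have h2 := hTc _ _ hch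
          simpa [FreeMonoid.ofList_toList] using h2
        exact c.eq.mpr this
    exact Finite.of_surjective _ hsurj
  -- the quotient map
  set φ : List A → c.Quotient := fun x => ((FreeMonoid.ofList x : FreeMonoid A) : c.Quotient)
    with hφ
  have hφnil : φ [] = 1 := rfl
  have hφapp : ∀ x y : List A, φ (x ++ y) = φ x * φ y := by
    intro x y
    rw [hφ]
    simp only [FreeMonoid.ofList_append]
    rfl
  -- powers of transition functions
  have hpow : ∀ (v : List A) (n : ℕ), (T v) ^ n = T (wpow v n) := by
    intro v n
    induction n with
    | zero =>
      funext q
      show q = D.evalFrom q []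
      rw [DFA.evalFrom_nil]
    | succ n ih =>
      funext q
      show ((T v) ^ (n + 1) : Function.End σ) q = D.evalFrom q (wpow v (n + 1))
      rw [pow_succ]
      show ((T v) ^ n : Function.End σ) (T v q) = D.evalFrom q (wpow v (n + 1))
      rw [ih]
      show D.evalFrom (D.evalFrom q v) (wpow v n) = D.evalFrom q (v ++ wpow v n)
      rw [DFA.evalFrom_of_append]
  -- aperiodicity of the syntactic monoid
  have hap : ∀ z : c.Quotient, ∃ k, 1 ≤ k ∧ z ^ k = z ^ (k + 1) := by
    intro z
    induction z using Quotient.ind with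
    | _ x =>
    set v : List A := FreeMonoid.toList x with hv
    obtain ⟨k, hk1, hkid⟩ := fin_exists_idem (T v)
    have hidem : (T v) ^ k = (T v) ^ (k + k) := by rw [pow_add, hkid]
    have hper := pow_stab hidem
    refine ⟨k, hk1, ?_⟩
    show ((x : c.Quotient)) ^ k = ((x : c.Quotient)) ^ (k + 1)
    have hxk : ∀ j : ℕ, ((x ^ j : FreeMonoid A) : c.Quotient) = (x : c.Quotient) ^ j := by
      intro j
      induction j with
      | zero => rfl
      | succ j ih => rw [pow_succ, pow_succ, ← ih]; rfl
    rw [← hxk, ← hxk, c.eq, hcr]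
    intro u w
    -- membership sequence
    set s : ℕ → Prop := fun n => u ++ wpow v n ++ w ∈ L with hs
    have hseq : ∀ a b : ℕ, (T v) ^ a = (T v) ^ b → (s a ↔ s b) := by
      intro a b hab
      exact hkey _ _ (by rw [← hpow, ← hpow, hab]) u w
    obtain ⟨N, hN⟩ := hcon u v w
    have hchain : ∀ n, N < n → s n → ∀ j, s (n + j) := by
      intro n hn hsn j
      induction j with
      | zero => exact hsn
      | succ j ih =>
        exact hN (n + j) (by omega) ih
    set n₀ : ℕ := k + (N + 1) * k with hn₀
    have hn₀N : N < n₀ := by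
      have : N + 1 ≤ (N + 1) * k := Nat.le_mul_of_pos_right _ (by omega)
      omega
    have hsk : s k ↔ s n₀ := hseq k n₀ (hper k le_rfl (N + 1))
    have hsk1 : s (k + 1) ↔ s (n₀ + 1) := by
      refine hseq (k + 1) (n₀ + 1) ?_
      have := hper (k + 1) (by omega) (N + 1)
      rw [this]
      congr 1
      omega
    have hfwd : s n₀ → s (n₀ + 1) := fun hs0 => by
      simpa using hchain n₀ hn₀N hs0 1
    have hbwd : s (n₀ + 1) → s n₀ := by
      intro hs1
      have h2 : s (n₀ + 1 + (k - 1)) := hchain (n₀ + 1) (by omega) hs1 (k - 1)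
      have h3 : s (n₀ + k) := by
        have : n₀ + 1 + (k - 1) = n₀ + k := by omega
        rwa [this] at h2
      have h4 : s n₀ ↔ s (n₀ + k) := by
        refine hseq n₀ (n₀ + k) ?_
        have := hper n₀ (by omega) 1
        rwa [one_mul] at this
      exact h4.mpr h3
    -- conclude s k ↔ s (k + 1)
    have hfinal : s k ↔ s (k + 1) := by
      rw [hsk, hsk1]
      exact ⟨hfwd, hbwd⟩
    have hk' : FreeMonoid.toList (x ^ k) = wpow v k := toList_pow x k
    have hk1' : FreeMonoid.toList (x ^ (k + 1)) = wpow v (k + 1) := toList_pow x (k + 1)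
    rw [hk', hk1']
    exact hfinal
  -- apply the Schützenberger argument
  have hsf := schutz hap φ hφnil hφapp
  haveI := Fintype.ofFinite c.Quotient
  have hφL : ∀ x y : List A, φ x = φ y → (x ∈ L ↔ y ∈ L) := by
    intro x y hxy
    have hcxy : c (FreeMonoid.ofList x) (FreeMonoid.ofList y) := c.eq.mp hxy
    rw [hcr] at hcxy
    have := hcxy [] []
    simpa [FreeMonoid.toList_ofList] using this
  set Phi2 : c.Quotient → Language A := fun m => {x : List A | φ x = m} with hPhi2
  have hLeq : L = ⨆ m : c.Quotient, if (∃ y, y ∈ L ∧ φ y = m) then Phi2 m else ⊥ := by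
    ext x
    constructor
    · intro hx
      rw [mem_lang_iSup]
      refine ⟨φ x, ?_⟩
      rw [if_pos ⟨x, hx, rfl⟩]
      exact rfl
    · intro hx
      rw [mem_lang_iSup] at hx
      obtain ⟨m, hm⟩ := hx
      by_cases hcond : ∃ y, y ∈ L ∧ φ y = m
      · rw [if_pos hcond] at hm
        obtain ⟨y, hyL, hym⟩ := hcond
        have hxm : φ x = m := hm
        exact (hφL x y (by rw [hxm, hym])).mpr hyL
      · rw [if_neg hcond] at hm
        exact hm.elim
  rw [hLeq]
  apply sf_iSup
  intro m
  by_cases hcond : ∃ y, y ∈ L ∧ φ y = m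
  · rw [if_pos hcond]; exact hsf m
  · rw [if_neg hcond]; exact sf_bot
end

section
/- Let G be a finitely generated abelian group with finite monoid generating set A = {x_1,...,x_r}. Then the set of all geodesic words over A is a piecewise excluding language: there is a finite set W of words over A such that a word over A is geodesic if and only if it contains no element of W as a (not necessarily consecutive) subsequence. -/
/-- The element of `G` represented by a word over the alphabet. -/
def evalWord {G A : Type*} [Monoid G] (ev : A → G) (w : List A) : G :=
  (w.map ev).prod

/-- A word is geodesic if no shorter word represents the same element. -/
def IsGeodesic {G A : Type*} [Monoid G] (ev : A → G) (w : List A) : Prop :=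
  ∀ w' : List A, evalWord ev w' = evalWord ev w → w.length ≤ w'.length

/-- A language is piecewise excluding if membership is defined by excluding a
finite set of (not necessarily consecutive) subsequences. -/
def PiecewiseExcluding {A : Type*} (L : Language A) : Prop :=
  ∃ W : Finset (List A), L = {w | ∀ u ∈ W, ¬ u.Sublist w}

private lemma evalWord_perm {G A : Type*} [CommMonoid G] (ev : A → G) {w w' : List A}
    (h : w.Perm w') : evalWord ev w = evalWord ev w' :=
  (h.map ev).prod_eq

private lemma isGeodesic_perm {G A : Type*} [CommMonoid G] (ev : A → G) {w w' : List A}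
    (h : w.Perm w') : IsGeodesic ev w ↔ IsGeodesic ev w' := by
  unfold IsGeodesic
  rw [evalWord_perm ev h, h.length_eq]

private lemma evalWord_append {G A : Type*} [Monoid G] (ev : A → G) (u d : List A) :
    evalWord ev (u ++ d) = evalWord ev u * evalWord ev d := by
  simp [evalWord]

private lemma not_geodesic_append {G A : Type*} [Monoid G] (ev : A → G) {u : List A}
    (h : ¬ IsGeodesic ev u) (d : List A) : ¬ IsGeodesic ev (u ++ d) := by
  unfold IsGeodesic at h
  push_neg at h
  obtain ⟨u', hev, hlen⟩ := h
  intro hg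
  have := hg (u' ++ d) (by rw [evalWord_append, evalWord_append, hev])
  simp only [List.length_append] at this
  omega

/-- For a finitely generated abelian group with finite monoid generating set
`x_1, …, x_r`, the language of geodesic words is piecewise excluding. -/
theorem stmt7 {G : Type*} [CommGroup G] {r : ℕ} (ev : Fin r → G)
    (hgen : Submonoid.closure (Set.range ev) = ⊤) :
    PiecewiseExcluding {w : List (Fin r) | IsGeodesic ev w} := by
  classical
  set c : List (Fin r) → (Fin r → ℕ) := fun w a => w.count a with hc
  set S : Set (Fin r → ℕ) := {v | ∃ w, c w = v ∧ ¬ IsGeodesic ev w} with hS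
  set M : Set (Fin r → ℕ) := {v | v ∈ S ∧ ∀ v' ∈ S, v' ≤ v → v' = v} with hM
  -- geodesicity depends only on the count vector
  have hcount : ∀ u u' : List (Fin r), c u = c u' →
      (IsGeodesic ev u ↔ IsGeodesic ev u') := fun u u' h =>
    isGeodesic_perm ev (List.perm_iff_count.2 fun a => congrFun h a)
  -- non-geodesicity is upward closed w.r.t. count vectors
  have hup : ∀ u w : List (Fin r), ¬ IsGeodesic ev u → c u ≤ c w →
      ¬ IsGeodesic ev w := by
    intro u w hu hle
    have hperm : (u ++ w.diff u).Perm w :=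
      List.subperm_append_diff_self_of_count_le (fun x _ => hle x)
    exact fun hw => not_geodesic_append ev hu _ ((isGeodesic_perm ev hperm).2 hw)
  -- length equals the sum of the counts
  have hlen : ∀ u : List (Fin r), u.length = ∑ a, c u a := by
    intro u
    induction u with
    | nil => simp [hc]
    | cons b t ih =>
      simp only [hc, List.count_cons, List.length_cons] at *
      rw [Finset.sum_add_distrib]
      simp [← ih]
  -- M is a finite set (Dickson's lemma)
  have hMfin : M.Finite := by
    have hanti : IsAntichain (· ≤ ·) M := by
      intro v hv v' hv' hne hle
      exact hne (hv'.2 v hv.1 hle)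
    have hpwo : M.PartiallyWellOrderedOn (· ≤ ·) :=
      Set.isPWO_of_wellQuasiOrderedLE M
    exact hanti.finite_of_partiallyWellOrderedOn hpwo
  -- every element of S lies above a minimal element
  have hmin : ∀ n (v : Fin r → ℕ), (∑ a, v a) = n → v ∈ S → ∃ m ∈ M, m ≤ v := by
    intro n
    induction n using Nat.strong_induction_on with
    | _ n ih =>
      intro v hn hv
      by_cases hvM : v ∈ M
      · exact ⟨v, hvM, le_refl v⟩
      · rw [hM, Set.mem_setOf_eq] at hvM
        push_neg at hvM
        obtain ⟨v', hv'S, hle, hne⟩ := hvM hv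
        have hex : ∃ a : Fin r, v' a ≠ v a := by
          by_contra h
          push_neg at h
          exact hne (funext h)
        obtain ⟨a₀, ha₀⟩ := hex
        have hsum : ∑ a, v' a < n := by
          rw [← hn]
          exact Finset.sum_lt_sum (fun a _ => hle a)
            ⟨a₀, Finset.mem_univ a₀, lt_of_le_of_ne (hle a₀) ha₀⟩
        obtain ⟨m, hm, hmle⟩ := ih _ hsum v' rfl hv'S
        exact ⟨m, hm, hmle.trans hle⟩
  -- the excluded words: all words whose count vector is minimal non-geodesic
  have hWfin : {u : List (Fin r) | c u ∈ M}.Finite := by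
    apply (List.finite_length_le (Fin r) (hMfin.toFinset.sup fun v => ∑ a, v a)).subset
    intro u hu
    simp only [Set.mem_setOf_eq] at hu ⊢
    rw [hlen u]
    exact Finset.le_sup (hMfin.mem_toFinset.2 hu)
  refine ⟨hWfin.toFinset, ?_⟩
  ext w
  simp only [Set.mem_setOf_eq, Set.Finite.mem_toFinset]
  constructor
  · intro hgeo u hu hsub
    obtain ⟨u₀, hcu₀, hngu₀⟩ := hu.1
    have hngu : ¬ IsGeodesic ev u := fun h => hngu₀ ((hcount u₀ u hcu₀).2 h)
    exact hup u w hngu (fun a => hsub.count_le a) hgeo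
  · intro hW
    by_contra hng
    have hcwS : c w ∈ S := ⟨w, rfl, hng⟩
    obtain ⟨m, hmM, hmle⟩ := hmin _ (c w) rfl hcwS
    obtain ⟨u₀, hcu₀, _⟩ := hmM.1
    have hsub : u₀.Subperm w := List.subperm_ext_iff.2 fun x _ => by
      have h1 : u₀.count x = m x := congrFun hcu₀ x
      have h2 : m x ≤ w.count x := hmle x
      omega
    obtain ⟨u, hperm, hsl⟩ := hsub
    have hcu : c u ∈ M := by
      have : c u = m := funext fun a => (hperm.count_eq a).trans (congrFun hcu₀ a)
      rw [this]; exact hmM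
    exact hW u hcu hsl
end

section
/- In the group G = ⟨a,b,c,d,r,s | ba²d = rcs, bd = s⟩ (free on a,b,c,d), for every k ≥ 0 the word b a^(2k+1) d is geodesic with respect to the generating set {a,b,c,d,r,s} and their inverses. -/
open FreeGroup in
/-- The relators of the presentation `⟨a,b,c,d,r,s ∣ ba²d = rcs, bd = s⟩`,
with generators indexed `a=0, b=1, c=2, d=3, r=4, s=5`. -/
def rels : Set (FreeGroup (Fin 6)) :=
  { (of 1 * of 0 * of 0 * of 3) * (of 4 * of 2 * of 5)⁻¹,
    (of 1 * of 3) * (of 5)⁻¹ }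

/-- The group `G = ⟨a,b,c,d,r,s ∣ ba²d = rcs, bd = s⟩`. -/
abbrev Gp : Type := PresentedGroup rels

/-- The inverse-closed alphabet on the six generators: `(i, true)` is the
generator `i` and `(i, false)` is its inverse. -/
def ev6 : Fin 6 × Bool → Gp :=
  fun p => cond p.2 (PresentedGroup.of p.1) (PresentedGroup.of p.1)⁻¹

/-- The positive letter for generator `i`. -/
def gl (i : Fin 6) : Fin 6 × Bool := (i, true)

namespace Aux11

/-- The letter value for the character given by generator values `v`. -/
def lv (v : Fin 6 → ℤ) (ℓ : Fin 6 × Bool) : ℤ := cond ℓ.2 (v ℓ.1) (-(v ℓ.1))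

/-- The character of `Gp` determined by generator values `v`. -/
def charHom (v : Fin 6 → ℤ)
    (h1 : v 1 + v 0 + v 0 + v 3 = v 4 + v 2 + v 5)
    (h2 : v 1 + v 3 = v 5) : Gp →* Multiplicative ℤ :=
  PresentedGroup.toGroup (f := fun i => Multiplicative.ofAdd (v i)) (by
    intro r hr
    simp only [rels, Set.mem_insert_iff, Set.mem_singleton_iff] at hr
    rcases hr with rfl | rfl <;>
    · apply Multiplicative.toAdd.injective
      simp [map_mul, map_inv]
      omega)

lemma charHom_letter (v h1 h2) (ℓ : Fin 6 × Bool) :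
    Multiplicative.toAdd (charHom v h1 h2 (ev6 ℓ)) = lv v ℓ := by
  rcases ℓ with ⟨i, b⟩
  cases b <;> simp [ev6, lv, charHom, PresentedGroup.toGroup.of]

lemma eval_cons {G A : Type*} [Monoid G] (ev : A → G) (x : A) (l : List A) :
    evalWord ev (x :: l) = ev x * evalWord ev l := by simp [evalWord]

lemma eval_append {G A : Type*} [Monoid G] (ev : A → G) (l₁ l₂ : List A) :
    evalWord ev (l₁ ++ l₂) = evalWord ev l₁ * evalWord ev l₂ := by simp [evalWord]

lemma charHom_eval (v h1 h2) (l : List (Fin 6 × Bool)) :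
    Multiplicative.toAdd (charHom v h1 h2 (evalWord ev6 l)) = (l.map (lv v)).sum := by
  induction l with
  | nil => simp [evalWord]
  | cons x t ih => rw [eval_cons, map_mul, toAdd_mul, ih, List.map_cons, List.sum_cons,
      charHom_letter]

lemma char_eq (v : Fin 6 → ℤ)
    (h1 : v 1 + v 0 + v 0 + v 3 = v 4 + v 2 + v 5)
    (h2 : v 1 + v 3 = v 5) {w w' : List (Fin 6 × Bool)}
    (h : evalWord ev6 w' = evalWord ev6 w) :
    (w'.map (lv v)).sum = (w.map (lv v)).sum := by
  rw [← charHom_eval v h1 h2, ← charHom_eval v h1 h2, h]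

/-- The images of the generators in the affine group of `ℤ`:
`a ↦ (x ↦ x+1)`, `b ↦ (x ↦ -x)`, `c ↦ 1`, `d ↦ (x ↦ -x+1)`,
`r ↦ (x ↦ x-2)`, `s ↦ (x ↦ x-1)`. -/
def pimg : Fin 6 → Equiv.Perm ℤ := fun i =>
  match i with
  | 0 => Equiv.addRight 1
  | 1 => Equiv.neg ℤ
  | 2 => 1
  | 3 => (Equiv.neg ℤ).trans (Equiv.addRight 1)
  | 4 => Equiv.addRight (-2)
  | 5 => Equiv.addRight (-1)

def psi : Gp →* Equiv.Perm ℤ :=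
  PresentedGroup.toGroup (f := pimg) (by
    intro r hr
    simp only [rels, Set.mem_insert_iff, Set.mem_singleton_iff] at hr
    rcases hr with rfl | rfl <;>
    · simp only [map_mul, map_inv]
      rw [mul_inv_eq_one]
      ext x
      simp [pimg, FreeGroup.lift_apply_of, Equiv.Perm.mul_apply]
      ring)

lemma psi_of (i : Fin 6) : psi (PresentedGroup.of i) = pimg i := by
  simp [psi, PresentedGroup.toGroup.of]

lemma perm_sum (u : Fin 6 × Bool → ℤ) (l : List (Fin 6 × Bool))
    (hl : ∀ ℓ ∈ l, psi (ev6 ℓ) = Equiv.addRight (u ℓ)) :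
    psi (evalWord ev6 l) = Equiv.addRight ((l.map u).sum) := by
  induction l with
  | nil => ext x; simp [evalWord]
  | cons x t ih =>
      rw [eval_cons, map_mul, hl x (List.mem_cons_self),
        ih (fun ℓ hm => hl ℓ (List.mem_cons_of_mem x hm))]
      ext y
      simp [Equiv.Perm.mul_apply]
      ring

/-- generator values: `χ_a + χ_b + χ_c`. -/
def vf : Fin 6 → ℤ := fun i =>
  match i with | 0 => 1 | 1 => 1 | 2 => 1 | 3 => 0 | 4 => 1 | 5 => 1
/-- generator values: `χ_b`. -/
def vb : Fin 6 → ℤ := fun i =>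
  match i with | 0 => 0 | 1 => 1 | 2 => 0 | 3 => 0 | 4 => 0 | 5 => 1
/-- generator values: `χ_d`. -/
def vd : Fin 6 → ℤ := fun i =>
  match i with | 0 => 0 | 1 => 0 | 2 => 0 | 3 => 1 | 4 => 0 | 5 => 1
/-- generator values: `χ_a`. -/
def va : Fin 6 → ℤ := fun i =>
  match i with | 0 => 1 | 1 => 0 | 2 => 0 | 3 => 0 | 4 => 2 | 5 => 0
/-- translation amounts of the images under `psi` of the positive letters
`a, c, r, s` (values at `1` and `3` are irrelevant). -/
def vu : Fin 6 → ℤ := fun i =>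
  match i with | 0 => 1 | 1 => 0 | 2 => 0 | 3 => 0 | 4 => -2 | 5 => -1

lemma target_sum (v : Fin 6 → ℤ) (k : ℕ) :
    ((gl 1 :: (List.replicate (2 * k + 1) (gl 0) ++ [gl 3])).map (lv v)).sum
      = v 1 + (2 * k + 1) * v 0 + v 3 := by
  simp [lv, gl, List.sum_replicate]
  ring

lemma sum_le_len (l : List ℤ) (h : ∀ x ∈ l, x ≤ 1) : l.sum ≤ (l.length : ℤ) := by
  induction l with
  | nil => simp
  | cons x t ih =>
      have ht := ih (fun y hy => h y (List.mem_cons_of_mem x hy))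
      have hx := h x (List.mem_cons_self)
      simp only [List.sum_cons, List.length_cons]
      push_cast
      omega

lemma all_one (l : List ℤ) (h : ∀ x ∈ l, x ≤ 1) (h2 : (l.length : ℤ) ≤ l.sum) :
    ∀ x ∈ l, x = 1 := by
  induction l with
  | nil => simp
  | cons x t ih =>
      have ht : t.sum ≤ (t.length : ℤ) :=
        sum_le_len t (fun y hy => h y (List.mem_cons_of_mem x hy))
      have hx := h x (List.mem_cons_self)
      simp only [List.length_cons, List.sum_cons] at h2
      push_cast at h2
      intro y hy
      rcases List.mem_cons.mp hy with rfl | hy'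
      · omega
      · exact ih (fun z hz => h z (List.mem_cons_of_mem x hz)) (by omega) y hy'

lemma all_zero (l : List ℤ) (h : ∀ x ∈ l, 0 ≤ x) (h2 : l.sum ≤ 0) :
    ∀ x ∈ l, x = 0 := by
  induction l with
  | nil => simp
  | cons x t ih =>
      have ht : 0 ≤ t.sum := List.sum_nonneg (fun y hy => h y (List.mem_cons_of_mem x hy))
      have hx := h x (List.mem_cons_self)
      simp only [List.sum_cons] at h2
      intro y hy
      rcases List.mem_cons.mp hy with rfl | hy'
      · omega
      · exact ih (fun z hz => h z (List.mem_cons_of_mem x hz)) (by omega) y hy'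

lemma sum_map_sub {A : Type*} (l : List A) (f g : A → ℤ) :
    (l.map (fun x => f x - g x)).sum = (l.map f).sum - (l.map g).sum := by
  induction l with
  | nil => simp
  | cons x t ih => simp only [List.map_cons, List.sum_cons, ih]; ring

lemma sum_map_add {A : Type*} (l : List A) (f g : A → ℤ) :
    (l.map (fun x => f x + g x)).sum = (l.map f).sum + (l.map g).sum := by
  induction l with
  | nil => simp
  | cons x t ih => simp only [List.map_cons, List.sum_cons, ih]; ring

end Aux11

open Aux11 in
/-- For every `k ≥ 0`, the word `b a^(2k+1) d` is geodesic with respect to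
the generating set `{a,b,c,d,r,s}` and their inverses. -/
theorem stmt11 (k : ℕ) :
    IsGeodesic ev6 (gl 1 :: (List.replicate (2 * k + 1) (gl 0) ++ [gl 3])) := by
  intro w' h
  by_contra hlen
  push_neg at hlen
  simp only [List.length_cons, List.length_append, List.length_replicate,
    List.length_nil] at hlen
  have hL : w'.length ≤ 2 * k + 2 := by omega
  -- Step 1: the `χ_a + χ_b + χ_c` count forces every letter to be one of
  -- `a, b, c, r, s` (positive).
  have Hf : (w'.map (lv vf)).sum = 2 * k + 2 := by
    rw [char_eq vf (by decide) (by decide) h, target_sum]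
    show (1 : ℤ) + (2 * k + 1) * 1 + 0 = 2 * k + 2
    ring
  have hall1 : ∀ ℓ ∈ w', lv vf ℓ = 1 := by
    intro ℓ hm
    refine all_one (w'.map (lv vf)) ?_ ?_ _ (List.mem_map_of_mem hm)
    · rintro x hx
      obtain ⟨ℓ', _, rfl⟩ := List.mem_map.mp hx
      exact (by decide : ∀ p : Fin 6 × Bool, lv vf p ≤ 1) ℓ'
    · rw [Hf, List.length_map]
      omega
  have hmem5 : ∀ ℓ ∈ w', ℓ ∈ ([(0, true), (1, true), (2, true), (4, true), (5, true)] :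
      List (Fin 6 × Bool)) := fun ℓ hm =>
    (by decide : ∀ p : Fin 6 × Bool, lv vf p = 1 →
      p ∈ ([(0, true), (1, true), (2, true), (4, true), (5, true)] : List (Fin 6 × Bool)))
      ℓ (hall1 ℓ hm)
  -- Step 2: the `χ_b` and `χ_d` counts exclude the letter `b`.
  have Hb : (w'.map (lv vb)).sum = 1 := by
    rw [char_eq vb (by decide) (by decide) h, target_sum]
    show (1 : ℤ) + (2 * k + 1) * 0 + 0 = 1
    ring
  have Hd : (w'.map (lv vd)).sum = 1 := by
    rw [char_eq vd (by decide) (by decide) h, target_sum]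
    show (0 : ℤ) + (2 * k + 1) * 0 + 1 = 1
    ring
  have hbd : ∀ ℓ ∈ w', lv vb ℓ - lv vd ℓ = 0 := by
    intro ℓ hm
    refine all_zero (w'.map (fun p => lv vb p - lv vd p)) ?_ ?_ _ (List.mem_map_of_mem hm)
    · rintro x hx
      obtain ⟨ℓ', hm', rfl⟩ := List.mem_map.mp hx
      exact (by decide : ∀ p : Fin 6 × Bool,
        p ∈ ([(0, true), (1, true), (2, true), (4, true), (5, true)] :
          List (Fin 6 × Bool)) → 0 ≤ lv vb p - lv vd p) ℓ' (hmem5 ℓ' hm')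
    · rw [sum_map_sub, Hb, Hd]
      omega
  have hmem4 : ∀ ℓ ∈ w', ℓ ∈ ([(0, true), (2, true), (4, true), (5, true)] :
      List (Fin 6 × Bool)) := fun ℓ hm =>
    (by decide : ∀ p : Fin 6 × Bool,
      p ∈ ([(0, true), (1, true), (2, true), (4, true), (5, true)] :
        List (Fin 6 × Bool)) → lv vb p - lv vd p = 0 →
      p ∈ ([(0, true), (2, true), (4, true), (5, true)] : List (Fin 6 × Bool)))
      ℓ (hmem5 ℓ hm) (hbd ℓ hm)
  -- Step 3: the affine invariant `psi`.
  have hperm : ∀ ℓ ∈ w', psi (ev6 ℓ) = Equiv.addRight (lv vu ℓ) := by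
    intro ℓ hm
    have h4 := hmem4 ℓ hm
    fin_cases h4
    · show psi (ev6 (0, true)) = _
      show psi (PresentedGroup.of 0) = _
      rw [psi_of]; rfl
    · show psi (ev6 (2, true)) = _
      show psi (PresentedGroup.of 2) = _
      rw [psi_of]; ext x; simp [pimg, lv, vu]
    · show psi (ev6 (4, true)) = _
      show psi (PresentedGroup.of 4) = _
      rw [psi_of]; rfl
    · show psi (ev6 (5, true)) = _
      show psi (PresentedGroup.of 5) = _
      rw [psi_of]; rfl
  have Hu : (w'.map (lv vu)).sum = -(2 * k + 2) := by
    have e1 := perm_sum (lv vu) w' hperm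
    have e2 : psi (evalWord ev6 (gl 1 :: (List.replicate (2 * k + 1) (gl 0) ++ [gl 3])))
        (0 : ℤ) = -(2 * k + 2) := by
      rw [eval_cons, eval_append, map_mul, map_mul]
      have hrep := perm_sum (lv vu) (List.replicate (2 * k + 1) (gl 0)) (by
        intro ℓ hm
        rw [List.eq_of_mem_replicate hm]
        show psi (PresentedGroup.of 0) = _
        rw [psi_of]; rfl)
      rw [hrep]
      show psi (ev6 (gl 1)) _ = _
      have h1 : psi (ev6 (gl 1)) = pimg 1 := by
        show psi (PresentedGroup.of 1) = _; rw [psi_of]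
      have h3 : psi (evalWord ev6 [gl 3]) = pimg 3 := by
        show psi (ev6 (gl 3) * 1) = _
        rw [mul_one]
        show psi (PresentedGroup.of 3) = _; rw [psi_of]
      rw [h1, h3]
      simp [pimg, List.map_replicate, List.sum_replicate, lv, vu, gl]
      ring
    rw [h, e1] at *
    have := e2
    simp only [Equiv.coe_addRight] at this
    omega
  -- Step 4: the `χ_a` count.
  have Ha : (w'.map (lv va)).sum = 2 * k + 1 := by
    rw [char_eq va (by decide) (by decide) h, target_sum]
    show (0 : ℤ) + (2 * k + 1) * 1 + 0 = 2 * k + 1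
    ring
  -- Step 5: combine to exclude the letter `a`.
  have hg : ∀ ℓ ∈ w', lv va ℓ + lv vu ℓ + lv vd ℓ = 0 := by
    intro ℓ hm
    refine all_zero (w'.map (fun p => lv va p + lv vu p + lv vd p)) ?_ ?_ _
      (List.mem_map_of_mem hm)
    · rintro x hx
      obtain ⟨ℓ', hm', rfl⟩ := List.mem_map.mp hx
      exact (by decide : ∀ p : Fin 6 × Bool,
        p ∈ ([(0, true), (2, true), (4, true), (5, true)] : List (Fin 6 × Bool)) →
        0 ≤ lv va p + lv vu p + lv vd p) ℓ' (hmem4 ℓ' hm')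
    · have : (w'.map (fun p => lv va p + lv vu p + lv vd p)).sum
          = (w'.map (fun p => lv va p + lv vu p)).sum + (w'.map (lv vd)).sum := by
        rw [← sum_map_add]
      rw [this, sum_map_add, Ha, Hu, Hd]
      omega
  -- Step 6: parity contradiction.
  have hdvd : (2 : ℤ) ∣ (w'.map (lv va)).sum := by
    refine List.dvd_sum ?_
    rintro x hx
    obtain ⟨ℓ', hm', rfl⟩ := List.mem_map.mp hx
    exact (by decide : ∀ p : Fin 6 × Bool,
      p ∈ ([(0, true), (2, true), (4, true), (5, true)] : List (Fin 6 × Bool)) →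
      lv va p + lv vu p + lv vd p = 0 → (2 : ℤ) ∣ lv va p)
      ℓ' (hmem4 ℓ' hm') (hg ℓ' hm')
  rw [Ha] at hdvd
  omega
end

section
/- The set of geodesic words for the free group on {a,b,c,d} with respect to the 6-element generating set {a,b,c,d,r,s} where r = b a² b⁻¹ c⁻¹ and s = bd (closed under inverses) is not a star-free language. -/

lemma mk_rel_one {x : FreeGroup (Fin 6)} (hx : x ∈ rels) : PresentedGroup.mk rels x = 1 :=
  (QuotientGroup.eq_one_iff _).2 (Subgroup.subset_normalClosure hx)

lemma rel2' : (PresentedGroup.of 1 * PresentedGroup.of 3 : Gp) = PresentedGroup.of 5 := by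
  have h := mk_rel_one (x := (FreeGroup.of 1 * FreeGroup.of 3) * (FreeGroup.of 5)⁻¹)
    (by right; rfl)
  simp only [map_mul, map_inv, mul_inv_eq_one] at h
  exact h

lemma rel1' : (PresentedGroup.of 1 * PresentedGroup.of 0 * PresentedGroup.of 0 * PresentedGroup.of 3 : Gp)
    = PresentedGroup.of 4 * PresentedGroup.of 2 * PresentedGroup.of 5 := by
  have h := mk_rel_one (x := (FreeGroup.of 1 * FreeGroup.of 0 * FreeGroup.of 0 * FreeGroup.of 3) * (FreeGroup.of 4 * FreeGroup.of 2 * FreeGroup.of 5)⁻¹)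
    (by left; rfl)
  simp only [map_mul, map_inv, mul_inv_eq_one] at h
  exact h

lemma rc' : (PresentedGroup.of 4 * PresentedGroup.of 2 : Gp)
    = PresentedGroup.of 1 * PresentedGroup.of 0 * PresentedGroup.of 0 * (PresentedGroup.of 1)⁻¹ := by
  have h1 := rel1'
  rw [← rel2'] at h1
  calc (PresentedGroup.of 4 * PresentedGroup.of 2 : Gp)
      = (PresentedGroup.of 4 * PresentedGroup.of 2 * (PresentedGroup.of 1 * PresentedGroup.of 3))
        * (PresentedGroup.of 1 * PresentedGroup.of 3)⁻¹ := by group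
    _ = (PresentedGroup.of 1 * PresentedGroup.of 0 * PresentedGroup.of 0 * PresentedGroup.of 3)
        * (PresentedGroup.of 1 * PresentedGroup.of 3)⁻¹ := by rw [← h1]
    _ = PresentedGroup.of 1 * PresentedGroup.of 0 * PresentedGroup.of 0 * (PresentedGroup.of 1)⁻¹ := by group


def expHom (v : Fin 6 → ℤ)
    (h : ∀ r ∈ rels, FreeGroup.lift (fun i => Multiplicative.ofAdd (v i)) r = 1) :
    Gp →* Multiplicative ℤ :=
  PresentedGroup.toGroup h

lemma relcheck (v : Fin 6 → ℤ) (h1 : v 1 + v 0 + v 0 + v 3 = v 4 + v 2 + v 5)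
    (h2 : v 1 + v 3 = v 5) :
    ∀ r ∈ rels, FreeGroup.lift (fun i => Multiplicative.ofAdd (v i)) r = 1 := by
  rintro r (rfl | rfl)
  · simp only [map_mul, map_inv, FreeGroup.lift_apply_of, mul_inv_eq_one, ← ofAdd_add]
    exact congrArg Multiplicative.ofAdd (by omega)
  · simp only [map_mul, map_inv, FreeGroup.lift_apply_of, mul_inv_eq_one, ← ofAdd_add]
    exact congrArg Multiplicative.ofAdd (by omega)


def fP : Fin 6 → Equiv.Perm (ZMod 3) :=
  ![Equiv.neg (ZMod 3), Equiv.addLeft 1, 1, Equiv.addLeft 2, 1, 1]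

def permHom : Gp →* Equiv.Perm (ZMod 3) :=
  PresentedGroup.toGroup (f := fP) (by
    rintro r (rfl | rfl)
    · simp only [map_mul, map_inv, FreeGroup.lift_apply_of, mul_inv_eq_one]
      decide
    · simp only [map_mul, map_inv, FreeGroup.lift_apply_of, mul_inv_eq_one]
      decide)

/-- signed indicator of generator `i` -/
def nu (i : Fin 6) (l : Fin 6 × Bool) : ℤ :=
  if l.1 = i then (if l.2 then 1 else -1) else 0

lemma evalWord_cons {G A : Type*} [Monoid G] (ev : A → G) (x : A) (w : List A) :
    evalWord ev (x :: w) = ev x * evalWord ev w := by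
  simp [evalWord]

lemma hom_evalWord (φ : Gp →* Multiplicative ℤ) (t : Fin 6 × Bool → ℤ)
    (h : ∀ l, φ (ev6 l) = Multiplicative.ofAdd (t l)) (w : List (Fin 6 × Bool)) :
    φ (evalWord ev6 w) = Multiplicative.ofAdd ((w.map t).sum) := by
  induction w with
  | nil => simp [evalWord]
  | cons x w ih => rw [evalWord_cons, map_mul, ih, h, ← ofAdd_add, List.map_cons, List.sum_cons]

lemma expHom_letter (v : Fin 6 → ℤ)
    (h : ∀ r ∈ rels, FreeGroup.lift (fun i => Multiplicative.ofAdd (v i)) r = 1)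
    (l : Fin 6 × Bool) :
    expHom v h (ev6 l) = Multiplicative.ofAdd (if l.2 then v l.1 else -v l.1) := by
  obtain ⟨i, b⟩ := l
  cases b <;> simp [ev6, expHom, PresentedGroup.toGroup.of, ← ofAdd_neg]

lemma sum_map_add (f g : Fin 6 × Bool → ℤ) (w : List (Fin 6 × Bool)) :
    (w.map (fun x => f x + g x)).sum = (w.map f).sum + (w.map g).sum := by
  induction w with
  | nil => simp
  | cons x w ih => simp [ih]; ring

lemma abs_sum_le (f : Fin 6 × Bool → ℤ) (w : List (Fin 6 × Bool)) :
    |(w.map f).sum| ≤ (w.map (fun x => |f x|)).sum := by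
  induction w with
  | nil => simp
  | cons x w ih =>
    simp only [List.map_cons, List.sum_cons]
    exact le_trans (abs_add_le _ _) (by linarith)

lemma sum_nonneg_zero (l : List ℤ) (h : ∀ x ∈ l, 0 ≤ x) (hs : l.sum = 0) :
    ∀ x ∈ l, x = 0 := by
  induction l with
  | nil => simp
  | cons a t ih =>
    have ha : 0 ≤ a := h a (by simp)
    have ht : ∀ x ∈ t, 0 ≤ x := fun x hx => h x (by simp [hx])
    have hts : 0 ≤ t.sum := List.sum_nonneg ht
    simp only [List.sum_cons] at hs
    have ha0 : a = 0 := by omega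
    have hts0 : t.sum = 0 := by omega
    intro x hx
    rcases List.mem_cons.1 hx with rfl | hx
    · exact ha0
    · exact ih ht hts0 x hx

lemma eval_target (n : ℕ) :
    evalWord ev6 ([gl 1] ++ List.replicate n (gl 0) ++ [gl 3])
      = PresentedGroup.of 1 * (PresentedGroup.of 0)^n * PresentedGroup.of 3 := by
  simp [evalWord, List.map_append, List.prod_append, List.map_replicate,
    List.prod_replicate, ev6, gl, mul_assoc]

lemma expHom_target (v : Fin 6 → ℤ)
    (h : ∀ r ∈ rels, FreeGroup.lift (fun i => Multiplicative.ofAdd (v i)) r = 1) (n : ℕ) :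
    expHom v h (PresentedGroup.of 1 * (PresentedGroup.of 0)^n * PresentedGroup.of 3)
      = Multiplicative.ofAdd (v 1 + n * v 0 + v 3) := by
  have hof : ∀ i, expHom v h (PresentedGroup.of i) = Multiplicative.ofAdd (v i) := by
    intro i; simp [expHom, PresentedGroup.toGroup.of]
  rw [map_mul, map_mul, map_pow, hof, hof, hof, ← ofAdd_nsmul, ← ofAdd_add, ← ofAdd_add]
  exact congrArg Multiplicative.ofAdd (by push_cast [nsmul_eq_mul]; ring)

lemma neg_pow_odd (n : ℕ) (h : Odd n) : (Equiv.neg (ZMod 3))^n = Equiv.neg (ZMod 3) := by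
  obtain ⟨k, rfl⟩ := h
  have h2 : (Equiv.neg (ZMod 3))^2 = 1 := by decide
  rw [pow_add, pow_mul, h2, one_pow, pow_one, one_mul]

lemma perm_target (n : ℕ) (h : Odd n) :
    permHom (PresentedGroup.of 1 * (PresentedGroup.of 0)^n * PresentedGroup.of 3) 0 = 2 := by
  have hof : ∀ i, permHom (PresentedGroup.of i) = fP i := by
    intro i; simp [permHom, PresentedGroup.toGroup.of]
  rw [map_mul, map_mul, map_pow, hof, hof, hof]
  rw [Equiv.Perm.mul_apply, Equiv.Perm.mul_apply,
    show (fP 0) = Equiv.neg (ZMod 3) from rfl, neg_pow_odd n h]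
  decide

lemma perm_letter_fix (l : Fin 6 × Bool) (h1 : l.1 ≠ 1) (h3 : l.1 ≠ 3) :
    permHom (ev6 l) 0 = 0 := by
  have hof : ∀ i, permHom (PresentedGroup.of i) = fP i := by
    intro i; simp [permHom, PresentedGroup.toGroup.of]
  obtain ⟨i, b⟩ := l
  simp only at h1 h3
  cases b
  · have : permHom (ev6 (i, false)) = (fP i)⁻¹ := by simp [ev6, map_inv, hof]
    rw [this]
    fin_cases i <;> first | (exact absurd rfl h1) | (exact absurd rfl h3) | decide
  · have : permHom (ev6 (i, true)) = fP i := by simp [ev6, hof]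
    rw [this]
    fin_cases i <;> first | (exact absurd rfl h1) | (exact absurd rfl h3) | decide

lemma sum_map_mul (c : ℤ) (f : Fin 6 × Bool → ℤ) (w : List (Fin 6 × Bool)) :
    (w.map (fun x => c * f x)).sum = c * (w.map f).sum := by
  induction w with
  | nil => simp
  | cons x w ih => simp [ih]; ring

lemma perm_fix_all (w : List (Fin 6 × Bool)) (h : ∀ l ∈ w, permHom (ev6 l) 0 = 0) :
    permHom (evalWord ev6 w) 0 = 0 := by
  induction w with
  | nil => simp [evalWord]
  | cons x w ih =>
    rw [evalWord_cons, map_mul, Equiv.Perm.mul_apply,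
      ih (fun l hl => h l (by simp [hl])), h x (by simp)]

lemma sum_map_one (w : List (Fin 6 × Bool)) :
    (w.map (fun _ => (1:ℤ))).sum = w.length := by
  induction w with
  | nil => simp
  | cons x w ih => simp [ih]; ring

lemma nu_ne_one (l : Fin 6 × Bool) (e : l.1 = 1) : nu 1 l ≠ 0 := by
  rcases l with ⟨i, b⟩
  simp only at e
  subst e
  cases b <;> decide

lemma nu_ne_three (l : Fin 6 × Bool) (e : l.1 = 3) : nu 3 l ≠ 0 := by
  rcases l with ⟨i, b⟩
  simp only at e
  subst e
  cases b <;> decide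

lemma geodesic_odd (n : ℕ) (hodd : Odd n) :
    IsGeodesic ev6 ([gl 1] ++ List.replicate n (gl 0) ++ [gl 3]) := by
  intro w' heq
  have hlen : ([gl 1] ++ List.replicate n (gl 0) ++ [gl 3]).length = n + 2 := by simp
  rw [hlen]
  rw [eval_target] at heq
  have key : ∀ (v : Fin 6 → ℤ)
      (h : ∀ r ∈ rels, FreeGroup.lift (fun i => Multiplicative.ofAdd (v i)) r = 1)
      (t : Fin 6 × Bool → ℤ)
      (ht : ∀ l, (if l.2 then v l.1 else -v l.1) = t l),
      (w'.map t).sum = v 1 + n * v 0 + v 3 := by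
    intro v h t ht
    have h1 := hom_evalWord (expHom v h) t (fun l => by rw [expHom_letter]; rw [ht]) w'
    rw [heq, expHom_target] at h1
    exact Multiplicative.ofAdd.injective h1.symm
  have hA : (w'.map (nu 0)).sum + 2 * (w'.map (nu 4)).sum = n := by
    have := key ![1,0,0,0,2,0] (relcheck _ (by decide) (by decide))
      (fun l => nu 0 l + 2 * nu 4 l) (by decide)
    rw [sum_map_add, sum_map_mul] at this
    simpa using this
  have hB : (w'.map (nu 1)).sum + (w'.map (nu 5)).sum = 1 := by
    have := key ![0,1,0,0,0,1] (relcheck _ (by decide) (by decide))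
      (fun l => nu 1 l + nu 5 l) (by decide)
    rw [sum_map_add] at this
    simpa using this
  have hC : (w'.map (nu 2)).sum + (-1) * (w'.map (nu 4)).sum = 0 := by
    have := key ![0,0,1,0,-1,0] (relcheck _ (by decide) (by decide))
      (fun l => nu 2 l + (-1) * nu 4 l) (by decide)
    rw [sum_map_add, sum_map_mul] at this
    simpa using this
  have hD : (w'.map (nu 3)).sum + (w'.map (nu 5)).sum = 1 := by
    have := key ![0,0,0,1,0,1] (relcheck _ (by decide) (by decide))
      (fun l => nu 3 l + nu 5 l) (by decide)
    rw [sum_map_add] at this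
    simpa using this
  have hL : (w'.length : ℤ) =
      (w'.map (fun l => |nu 0 l|)).sum + ((w'.map (fun l => |nu 1 l|)).sum +
      ((w'.map (fun l => |nu 2 l|)).sum + ((w'.map (fun l => |nu 3 l|)).sum +
      ((w'.map (fun l => |nu 4 l|)).sum + (w'.map (fun l => |nu 5 l|)).sum)))) := by
    rw [← sum_map_add, ← sum_map_add, ← sum_map_add, ← sum_map_add, ← sum_map_add,
      ← sum_map_one w']
    congr 1
    have hone : ∀ l : Fin 6 × Bool,
        (1:ℤ) = |nu 0 l| + (|nu 1 l| + (|nu 2 l| + (|nu 3 l| + (|nu 4 l| + |nu 5 l|)))) := by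
      decide
    exact List.map_congr_left (fun l _ => hone l)
  have habs : ∀ i : Fin 6, -((w'.map (fun l => |nu i l|)).sum) ≤ (w'.map (nu i)).sum ∧
      (w'.map (nu i)).sum ≤ (w'.map (fun l => |nu i l|)).sum := by
    intro i
    exact abs_le.1 (abs_sum_le (nu i) w')
  by_cases hbd : (w'.map (fun l => |nu 1 l|)).sum + (w'.map (fun l => |nu 3 l|)).sum = 0
  · exfalso
    have hz : ∀ x ∈ (w'.map (fun l => |nu 1 l| + |nu 3 l|)), x = 0 := by
      apply sum_nonneg_zero
      · intro x hx
        obtain ⟨l, _, rfl⟩ := List.mem_map.1 hx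
        positivity
      · rw [sum_map_add]; exact hbd
    have hfix : permHom (evalWord ev6 w') 0 = 0 := by
      apply perm_fix_all
      intro l hl
      have h0 : |nu 1 l| + |nu 3 l| = 0 := hz _ (List.mem_map.2 ⟨l, hl, rfl⟩)
      have a1 : nu 1 l = 0 := by
        have t1 := abs_nonneg (nu 1 l)
        have t3 := abs_nonneg (nu 3 l)
        have : |nu 1 l| = 0 := by omega
        exact abs_eq_zero.1 this
      have a3 : nu 3 l = 0 := by
        have t1 := abs_nonneg (nu 1 l)
        have t3 := abs_nonneg (nu 3 l)
        have : |nu 3 l| = 0 := by omega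
        exact abs_eq_zero.1 this
      exact perm_letter_fix l (fun e => nu_ne_one l e a1) (fun e => nu_ne_three l e a3)
    rw [heq, perm_target n hodd] at hfix
    exact absurd hfix (by decide)
  · have cnn : ∀ i : Fin 6, 0 ≤ (w'.map (fun l => |nu i l|)).sum := by
      intro i
      apply List.sum_nonneg
      intro x hx
      obtain ⟨l, _, rfl⟩ := List.mem_map.1 hx
      positivity
    have c1 := cnn 1
    have c3 := cnn 3
    have c0 := cnn 0
    have c2 := cnn 2
    have c4 := cnn 4
    have c5 := cnn 5
    have h0 := habs 0
    have h1 := habs 1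
    have h2 := habs 2
    have h3 := habs 3
    have h4 := habs 4
    have h5 := habs 5
    omega

def shortWord : ℕ → List (Fin 6 × Bool)
  | 0 => [gl 5]
  | k+1 => gl 4 :: gl 2 :: shortWord k

lemma shortWord_length (k : ℕ) : (shortWord k).length = 2*k+1 := by
  induction k with
  | zero => rfl
  | succ k ih => simp [shortWord, ih]; ring

lemma shortWord_eval (k : ℕ) : evalWord ev6 (shortWord k)
    = PresentedGroup.of 1 * (PresentedGroup.of 0)^(2*k) * PresentedGroup.of 3 := by
  induction k with
  | zero =>
    show evalWord ev6 [gl 5] = _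
    simp only [evalWord, List.map_cons, List.map_nil, List.prod_cons, List.prod_nil, mul_one]
    show PresentedGroup.of 5 = _
    rw [← rel2', pow_zero, mul_one]
  | succ k ih =>
    show evalWord ev6 (gl 4 :: gl 2 :: shortWord k) = _
    rw [evalWord_cons, evalWord_cons, ih]
    show PresentedGroup.of 4 * (PresentedGroup.of 2 * _) = _
    rw [← mul_assoc, rc']
    have h2 : 2*(k+1) = 2 + 2*k := by ring
    rw [h2, pow_add, pow_two]
    group

lemma not_geod_even (k : ℕ) :
    ¬ IsGeodesic ev6 ([gl 1] ++ List.replicate (2*k) (gl 0) ++ [gl 3]) := by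
  intro h
  have hh := h (shortWord k) (by rw [shortWord_eval, eval_target])
  rw [shortWord_length] at hh
  simp only [List.length_append, List.length_replicate, List.length_cons,
    List.length_nil] at hh
  omega

section Pump

variable {A : Type*}

lemma rep_split {ch : A} {t1 t2 : List A} {n : ℕ} (h : t1 ++ t2 = List.replicate n ch) :
    t1 = List.replicate t1.length ch ∧ t2 = List.replicate t2.length ch ∧
      t1.length + t2.length = n := by
  refine ⟨?_, ?_, ?_⟩
  · exact List.eq_replicate_of_mem (fun x hx =>
      List.eq_of_mem_replicate (h ▸ List.mem_append_left t2 hx))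
  · exact List.eq_replicate_of_mem (fun x hx =>
      List.eq_of_mem_replicate (h ▸ List.mem_append_right t1 hx))
  · have := congrArg List.length h
    simpa using this

lemma split_rep (ch : A) (u w x y : List A) (n : ℕ)
    (h : x ++ y = u ++ (List.replicate n ch ++ w)) :
    (∃ u₂, u = x ++ u₂ ∧ y = u₂ ++ (List.replicate n ch ++ w)) ∨
    (∃ i, i ≤ n ∧ x = u ++ List.replicate i ch ∧ y = List.replicate (n-i) ch ++ w) ∨
    (∃ w₁ w₂, w = w₁ ++ w₂ ∧ x = u ++ (List.replicate n ch ++ w₁) ∧ y = w₂) := by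
  rcases List.append_eq_append_iff.1 h with ⟨u₂, hu, hy⟩ | ⟨t, hx, hrw⟩
  · exact Or.inl ⟨u₂, hu, hy⟩
  · rcases List.append_eq_append_iff.1 hrw.symm with ⟨t₂, hrep, hyy⟩ | ⟨w₁, ht, hw⟩
    · obtain ⟨h1, h2, h3⟩ := rep_split hrep.symm
      refine Or.inr (Or.inl ⟨t.length, by omega, ?_, ?_⟩)
      · rw [hx, ← h1]
      · rw [hyy, h2]
        congr 2
        omega
    · exact Or.inr (Or.inr ⟨w₁, y, hw, by rw [hx, ht], rfl⟩)

lemma rep_rep (ch : A) (a b : ℕ) (w : List A) :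
    List.replicate a ch ++ (List.replicate b ch ++ w) = List.replicate (a+b) ch ++ w := by
  rw [← List.append_assoc, ← List.replicate_add]

lemma starfree_pump (ch : A) {L : Language A} (h : StarFree L) :
    ∃ N : ℕ, ∀ u w : List A, ∀ n : ℕ, N ≤ n →
      (u ++ List.replicate n ch ++ w ∈ L ↔ u ++ List.replicate (n+1) ch ++ w ∈ L) := by
  induction h with
  | finite L hfin =>
    obtain ⟨N, hN⟩ := (hfin.image List.length).bddAbove
    refine ⟨N + 1, fun u w n hn => ?_⟩
    have hlong : ∀ m : ℕ, n ≤ m → (u ++ List.replicate m ch ++ w) ∉ L := by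
      intro m hm hmem
      have : (u ++ List.replicate m ch ++ w).length ≤ N :=
        hN (Set.mem_image_of_mem _ hmem)
      simp only [List.length_append, List.length_replicate] at this
      omega
    exact iff_of_false (hlong n le_rfl) (hlong (n+1) (by omega))
  | union L₁ L₂ h₁ h₂ ih₁ ih₂ =>
    obtain ⟨N₁, hN₁⟩ := ih₁
    obtain ⟨N₂, hN₂⟩ := ih₂
    refine ⟨max N₁ N₂, fun u w n hn => ?_⟩
    have e₁ := hN₁ u w n (le_trans (le_max_left _ _) hn)
    have e₂ := hN₂ u w n (le_trans (le_max_right _ _) hn)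
    have hm : ∀ (x : List A), (x ∈ L₁ ⊔ L₂) ↔ (x ∈ L₁ ∨ x ∈ L₂) := fun x => Iff.rfl
    rw [hm, hm, e₁, e₂]
  | inter L₁ L₂ h₁ h₂ ih₁ ih₂ =>
    obtain ⟨N₁, hN₁⟩ := ih₁
    obtain ⟨N₂, hN₂⟩ := ih₂
    refine ⟨max N₁ N₂, fun u w n hn => ?_⟩
    have e₁ := hN₁ u w n (le_trans (le_max_left _ _) hn)
    have e₂ := hN₂ u w n (le_trans (le_max_right _ _) hn)
    have hm : ∀ (x : List A), (x ∈ L₁ ⊓ L₂) ↔ (x ∈ L₁ ∧ x ∈ L₂) := fun x => Iff.rfl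
    rw [hm, hm, e₁, e₂]
  | compl L h ih =>
    obtain ⟨N, hN⟩ := ih
    exact ⟨N, fun u w n hn => not_congr (hN u w n hn)⟩
  | concat L₁ L₂ h₁ h₂ ih₁ ih₂ =>
    obtain ⟨N₁, hN₁⟩ := ih₁
    obtain ⟨N₂, hN₂⟩ := ih₂
    refine ⟨N₁ + N₂ + 2, fun u w n hn => ?_⟩
    constructor
    · intro hmem
      obtain ⟨x, hx, y, hy, hxy⟩ := Language.mem_mul.1 hmem
      rcases split_rep ch u w x y n (by rw [hxy, List.append_assoc]) with
        ⟨u₂, hu, hyv⟩ | ⟨i, hi, hxv, hyv⟩ | ⟨w₁, w₂, hw, hxv, hyv⟩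
      · rw [← List.append_assoc] at hyv
        have hy2 : u₂ ++ List.replicate (n+1) ch ++ w ∈ L₂ := by
          rw [← hN₂ u₂ w n (by omega), ← hyv]; exact hy
        refine Language.mem_mul.2 ⟨x, hx, _, hy2, ?_⟩
        rw [hu]
        simp [List.append_assoc]
      · by_cases hcase : N₁ + 1 ≤ i
        · have hx' : u ++ List.replicate (i+1) ch ∈ L₁ := by
            have := (hN₁ u [] i (by omega)).1 (by simpa using hxv ▸ hx)
            simpa using this
          refine Language.mem_mul.2 ⟨_, hx', y, hy, ?_⟩
          rw [hyv, List.append_assoc, rep_rep]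
          have : i + 1 + (n - i) = n + 1 := by omega
          rw [this, List.append_assoc]
        · have hy' : List.replicate (n-i+1) ch ++ w ∈ L₂ := by
            have := (hN₂ [] w (n-i) (by omega)).1 (by simpa using hyv ▸ hy)
            simpa using this
          refine Language.mem_mul.2 ⟨x, hx, _, hy', ?_⟩
          rw [hxv, List.append_assoc, rep_rep]
          have : i + (n - i + 1) = n + 1 := by omega
          rw [this, List.append_assoc]
      · rw [← List.append_assoc] at hxv
        have hx2 : u ++ List.replicate (n+1) ch ++ w₁ ∈ L₁ := by
          rw [← hN₁ u w₁ n (by omega), ← hxv]; exact hx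
        refine Language.mem_mul.2 ⟨_, hx2, w₂, hyv ▸ hy, ?_⟩
        rw [hw]
        simp [List.append_assoc]
    · intro hmem
      obtain ⟨x, hx, y, hy, hxy⟩ := Language.mem_mul.1 hmem
      rcases split_rep ch u w x y (n+1) (by rw [hxy, List.append_assoc]) with
        ⟨u₂, hu, hyv⟩ | ⟨i, hi, hxv, hyv⟩ | ⟨w₁, w₂, hw, hxv, hyv⟩
      · rw [← List.append_assoc] at hyv
        have hy2 : u₂ ++ List.replicate n ch ++ w ∈ L₂ := by
          rw [hN₂ u₂ w n (by omega), ← hyv]; exact hy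
        refine Language.mem_mul.2 ⟨x, hx, _, hy2, ?_⟩
        rw [hu]
        simp [List.append_assoc]
      · by_cases hcase : N₁ + 1 ≤ i
        · have hx' : u ++ List.replicate (i-1) ch ∈ L₁ := by
            have := (hN₁ u [] (i-1) (by omega)).2 (by
              have hi1 : i - 1 + 1 = i := by omega
              rw [hi1]
              simpa using hxv ▸ hx)
            simpa using this
          refine Language.mem_mul.2 ⟨_, hx', y, hy, ?_⟩
          rw [hyv, List.append_assoc, rep_rep]
          have : i - 1 + (n + 1 - i) = n := by omega
          rw [this, List.append_assoc]
        · have hy' : List.replicate (n-i) ch ++ w ∈ L₂ := by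
            have := (hN₂ [] w (n-i) (by omega)).2 (by
              have hi1 : n - i + 1 = n + 1 - i := by omega
              rw [hi1]
              simpa using hyv ▸ hy)
            simpa using this
          refine Language.mem_mul.2 ⟨x, hx, _, hy', ?_⟩
          rw [hxv, List.append_assoc, rep_rep]
          have : i + (n - i) = n := by omega
          rw [this, List.append_assoc]
      · rw [← List.append_assoc] at hxv
        have hx2 : u ++ List.replicate n ch ++ w₁ ∈ L₁ := by
          rw [hN₁ u w₁ n (by omega), ← hxv]; exact hx
        refine Language.mem_mul.2 ⟨_, hx2, w₂, hyv ▸ hy, ?_⟩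
        rw [hw]
        simp [List.append_assoc]

end Pump

/-- The language of geodesics of the free group on `{a,b,c,d}` with respect to
the generating set `{a,b,c,d,r,s}` (closed under inverses), where
`r = b a² b⁻¹ c⁻¹` and `s = bd`, is not star-free. -/
theorem stmt12 :
    ¬ StarFree {w : List (Fin 6 × Bool) | IsGeodesic ev6 w} := by
  intro h
  obtain ⟨N, hN⟩ := starfree_pump (gl 0) h
  have hodd : Odd (2*N+1) := ⟨N, by omega⟩
  have hiff := hN [gl 1] [gl 3] (2*N+1) (by omega)
  have hin : ([gl 1] ++ List.replicate (2*N+1) (gl 0) ++ [gl 3])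
      ∈ {w : List (Fin 6 × Bool) | IsGeodesic ev6 w} := geodesic_odd (2*N+1) hodd
  have hout : ([gl 1] ++ List.replicate (2*N+1+1) (gl 0) ++ [gl 3])
      ∉ {w : List (Fin 6 × Bool) | IsGeodesic ev6 w} := by
    intro hmem
    have h2 : 2*N+1+1 = 2*(N+1) := by omega
    rw [h2] at hmem
    exact not_geod_even (N+1) hmem
  exact hout (hiff.1 hin)
end

section
/- If L1 and L2 are the languages of geodesics of groups G1 with generating set X1 and G2 with generating set X2 (with X1, X2 disjoint), and both L1 and L2 are star-free, then the language L of geodesics of the direct product G1 × G2 over the generating set X1 ∪ X2 is star-free. -/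
section Aux

variable {A B : Type*}

/-- Preimage of a language under a letter-projection. -/
def preL (p : A → Option B) (L : Language B) : Language A :=
  {w | w.filterMap p ∈ L}

lemma filterMap_split (p : A → Option B) :
    ∀ {w : List A} {u v : List B}, w.filterMap p = u ++ v →
      ∃ w₁ w₂, w = w₁ ++ w₂ ∧ w₁.filterMap p = u ∧ w₂.filterMap p = v := by
  intro w
  induction w with
  | nil =>
    intro u v h
    simp only [List.filterMap_nil] at h
    rcases List.append_eq_nil_iff.mp h.symm with ⟨hu, hv⟩
    exact ⟨[], [], by simp [hu, hv]⟩
  | cons a t ih =>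
    intro u v h
    simp only [List.filterMap_cons] at h
    cases hpa : p a with
    | none =>
      rw [hpa] at h
      obtain ⟨w₁, w₂, rfl, h1, h2⟩ := ih h
      exact ⟨a :: w₁, w₂, by simp [List.filterMap_cons, hpa, h1, h2]⟩
    | some b =>
      rw [hpa] at h
      cases u with
      | nil =>
        cases v with
        | nil => simp at h
        | cons b' v' =>
          simp only [List.nil_append, List.cons.injEq] at h
          exact ⟨[], a :: t, by simp [List.filterMap_cons, hpa, h.1, h.2]⟩
      | cons b' u' =>
        simp only [List.cons_append, List.cons.injEq] at h
        obtain ⟨w₁, w₂, rfl, h1, h2⟩ := ih h.2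
        exact ⟨a :: w₁, w₂, by simp [List.filterMap_cons, hpa, h.1, h1, h2]⟩

def univL (A : Type*) : Language A := Set.univ

def emptyL (A : Type*) : Language A := (∅ : Set (List A))

lemma sfUniv : StarFree (univL A) := by
  have h := StarFree.compl (emptyL A) (StarFree.finite _ Set.finite_empty)
  have : (emptyL A)ᶜ = univL A := Set.compl_empty
  rwa [this] at h

lemma sfNoneStar (p : A → Option B) (hf : {a : A | p a ≠ none}.Finite) :
    StarFree {w : List A | ∀ a ∈ w, p a = none} := by
  set S : Language A := (fun a => [a]) '' {a : A | p a ≠ none} with hS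
  have hSfin : S.Finite := hf.image _
  have key : {w : List A | ∀ a ∈ w, p a = none}
      = (univL A * S * univL A)ᶜ := by
    ext w
    simp only [Set.mem_compl_iff, Set.mem_setOf_eq]
    constructor
    · intro hall hmem
      rcases Language.mem_mul.mp hmem with ⟨x, hx, y, -, rfl⟩
      rcases Language.mem_mul.mp hx with ⟨x', -, s, hs, rfl⟩
      rcases hs with ⟨a, ha, rfl⟩
      exact ha (hall a (by simp))
    · intro hnm a ha
      by_contra hpa
      rcases List.mem_iff_append.mp ha with ⟨s, t, rfl⟩
      exact hnm (Language.mem_mul.mpr ⟨s ++ [a],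
        Language.mem_mul.mpr ⟨s, trivial, [a], ⟨a, hpa, rfl⟩, rfl⟩,
        t, trivial, by simp⟩)
  rw [key]
  exact StarFree.compl _ (StarFree.concat _ _
    (StarFree.concat _ _ sfUniv (StarFree.finite _ hSfin)) sfUniv)

lemma firstLetter (p : A → Option B) :
    ∀ {w : List A} {b : B} {u : List B}, w.filterMap p = b :: u →
      ∃ w₁ a w₂, w = w₁ ++ a :: w₂ ∧ (∀ c ∈ w₁, p c = none) ∧ p a = some b ∧
        w₂.filterMap p = u := by
  intro w
  induction w with
  | nil => intro b u h; simp at h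
  | cons a t ih =>
    intro b u h
    simp only [List.filterMap_cons] at h
    cases hpa : p a with
    | none =>
      rw [hpa] at h
      obtain ⟨w₁, a', w₂, rfl, h1, h2, h3⟩ := ih h
      exact ⟨a :: w₁, a', w₂, rfl, by
        intro c hc
        rcases List.mem_cons.mp hc with rfl | hc
        · exact hpa
        · exact h1 c hc, h2, h3⟩
    | some b' =>
      rw [hpa] at h
      simp only [List.cons.injEq] at h
      exact ⟨[], a, t, rfl, by simp, by rw [hpa, h.1], h.2⟩

lemma sfSingleWord (p : A → Option B) (hf : {a : A | p a ≠ none}.Finite)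
    (hfb : ∀ b : B, {a : A | p a = some b}.Finite) (u : List B) :
    StarFree {w : List A | w.filterMap p = u} := by
  induction u with
  | nil =>
    have : {w : List A | w.filterMap p = []} = {w : List A | ∀ a ∈ w, p a = none} := by
      ext w; simp [List.filterMap_eq_nil_iff]
    rw [this]; exact sfNoneStar p hf
  | cons b u ih =>
    set Sb : Language A := (fun a => [a]) '' {a : A | p a = some b} with hSb
    set NS : Language A := {w : List A | ∀ a ∈ w, p a = none} with hNS
    set Pu : Language A := {w : List A | w.filterMap p = u} with hPu
    have key : ({w : List A | w.filterMap p = b :: u} : Language A)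
        = NS * Sb * Pu := by
      ext w
      simp only [Set.mem_setOf_eq]
      constructor
      · intro h
        obtain ⟨w₁, a, w₂, rfl, h1, h2, h3⟩ := firstLetter p h
        exact Language.mem_mul.mpr ⟨w₁ ++ [a],
          Language.mem_mul.mpr ⟨w₁, h1, [a], ⟨a, h2, rfl⟩, rfl⟩,
          w₂, h3, by simp⟩
      · intro h
        rcases Language.mem_mul.mp h with ⟨x, hx, w₂, hw₂, rfl⟩
        rcases Language.mem_mul.mp hx with ⟨w₁, hw₁, s, hs, rfl⟩
        rcases hs with ⟨a, ha, rfl⟩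
        have ha' : p a = some b := ha
        simp only [List.append_assoc, List.filterMap_append, List.singleton_append,
          List.filterMap_cons, ha']
        rw [List.filterMap_eq_nil_iff.mpr hw₁, hw₂]
        simp [ha']
    rw [key]
    have hNS' : StarFree NS := by rw [hNS]; exact sfNoneStar p hf
    exact StarFree.concat _ _ (StarFree.concat _ _ hNS'
      (StarFree.finite _ ((hfb b).image _))) ih

lemma sfPre (p : A → Option B) (hf : {a : A | p a ≠ none}.Finite)
    (hfb : ∀ b : B, {a : A | p a = some b}.Finite) {L : Language B}
    (hL : StarFree L) : StarFree (preL p L) := by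
  induction hL with
  | finite L hLfin =>
    refine Set.Finite.induction_on (motive := fun S _ => StarFree (preL p S)) L hLfin ?_ ?_
    · show StarFree (preL p (∅ : Set (List B)))
      have : preL p (∅ : Set (List B)) = (∅ : Set (List A)) := by
        ext w; exact Iff.rfl
      rw [this]; exact StarFree.finite _ Set.finite_empty
    · intro u S _ _ ih
      show StarFree (preL p (insert u S))
      have : preL p (insert u S) = {w : List A | w.filterMap p = u} ⊔ preL p S := by
        ext w; exact Iff.rfl
      rw [this]
      exact StarFree.union _ _ (sfSingleWord p hf hfb u) ih
  | concat L₁ L₂ h1 h2 ih1 ih2 =>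
    have : preL p (L₁ * L₂) = preL p L₁ * preL p L₂ := by
      ext w
      constructor
      · intro hw
        rcases Language.mem_mul.mp hw with ⟨u, hu, v, hv, huv⟩
        obtain ⟨w₁, w₂, rfl, e1, e2⟩ := filterMap_split p huv.symm
        refine Language.mem_mul.mpr ⟨w₁, ?_, w₂, ?_, rfl⟩
        · show List.filterMap p w₁ ∈ L₁; rw [e1]; exact hu
        · show List.filterMap p w₂ ∈ L₂; rw [e2]; exact hv
      · intro hw
        rcases Language.mem_mul.mp hw with ⟨w₁, h1', w₂, h2', rfl⟩
        exact Language.mem_mul.mpr ⟨w₁.filterMap p, h1', w₂.filterMap p, h2',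
          List.filterMap_append.symm⟩
    rw [this]; exact StarFree.concat _ _ ih1 ih2
  | union L₁ L₂ h1 h2 ih1 ih2 =>
    have : preL p (L₁ ⊔ L₂) = preL p L₁ ⊔ preL p L₂ := rfl
    rw [this]; exact StarFree.union _ _ ih1 ih2
  | inter L₁ L₂ h1 h2 ih1 ih2 =>
    have : preL p (L₁ ⊓ L₂) = preL p L₁ ⊓ preL p L₂ := rfl
    rw [this]; exact StarFree.inter _ _ ih1 ih2
  | compl L h ih =>
    have : preL p Lᶜ = (preL p L)ᶜ := rfl
    rw [this]; exact StarFree.compl _ ih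

end Aux

/-- If the geodesic languages of `(G₁,X₁)` and `(G₂,X₂)` are star-free, then
so is the geodesic language of `G₁ × G₂` over `X₁ ∪ X₂`. -/
theorem stmt13 {G₁ G₂ X₁ X₂ : Type*} [Group G₁] [Group G₂]
    [Fintype X₁] [Fintype X₂] (e₁ : X₁ → G₁) (e₂ : X₂ → G₂)
    (h₁ : StarFree {w : List X₁ | IsGeodesic e₁ w})
    (h₂ : StarFree {w : List X₂ | IsGeodesic e₂ w}) :
    StarFree {w : List (X₁ ⊕ X₂) |
      IsGeodesic (Sum.elim (fun x => ((e₁ x, 1) : G₁ × G₂))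
        (fun y => ((1, e₂ y) : G₁ × G₂))) w} := by
  classical
  set ev := Sum.elim (fun x => ((e₁ x, 1) : G₁ × G₂))
    (fun y => ((1, e₂ y) : G₁ × G₂)) with hev
  have eval_eq : ∀ w : List (X₁ ⊕ X₂),
      evalWord ev w = (evalWord e₁ (w.filterMap Sum.getLeft?),
        evalWord e₂ (w.filterMap Sum.getRight?)) := by
    intro w
    induction w with
    | nil => simp [evalWord]; rfl
    | cons a t ih =>
      cases a with
      | inl x =>
        simp only [evalWord, List.map_cons, List.prod_cons, List.filterMap_cons] at ih ⊢
        rw [hev] at ih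
        simp [hev, ih, Prod.ext_iff]
      | inr y =>
        simp only [evalWord, List.map_cons, List.prod_cons, List.filterMap_cons] at ih ⊢
        rw [hev] at ih
        simp [hev, ih, Prod.ext_iff]
  have length_eq : ∀ w : List (X₁ ⊕ X₂),
      (w.filterMap Sum.getLeft?).length + (w.filterMap Sum.getRight?).length
        = w.length := by
    intro w
    induction w with
    | nil => simp
    | cons a t ih =>
      cases a with
      | inl x => simp only [List.filterMap_cons]; simp; omega
      | inr y => simp only [List.filterMap_cons]; simp; omega
  have eval_mix : ∀ (u : List X₁) (v : List X₂),
      evalWord ev (u.map Sum.inl ++ v.map Sum.inr)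
        = (evalWord e₁ u, evalWord e₂ v) := by
    intro u v
    have hnone₁ : ∀ v : List X₂, v.filterMap (fun _ => (none : Option X₁)) = [] := by
      intro v; induction v <;> simp [*]
    have hnone₂ : ∀ u : List X₁, u.filterMap (fun _ => (none : Option X₂)) = [] := by
      intro u; induction u <;> simp [*]
    rw [eval_eq]
    simp [List.filterMap_append, List.filterMap_map, Function.comp_def, hnone₁, hnone₂]
  have geo_iff : ∀ w : List (X₁ ⊕ X₂), IsGeodesic ev w ↔
      IsGeodesic e₁ (w.filterMap Sum.getLeft?)
        ∧ IsGeodesic e₂ (w.filterMap Sum.getRight?) := by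
    intro w
    constructor
    · intro h
      constructor
      · intro u' hu'
        have := h ((u'.map Sum.inl) ++ ((w.filterMap Sum.getRight?).map Sum.inr))
          (by rw [eval_mix, eval_eq w, hu'])
        have hl := length_eq w
        simp only [List.length_append, List.length_map] at this
        omega
      · intro v' hv'
        have := h (((w.filterMap Sum.getLeft?).map Sum.inl) ++ (v'.map Sum.inr))
          (by rw [eval_mix, eval_eq w, hv'])
        have hl := length_eq w
        simp only [List.length_append, List.length_map] at this
        omega
    · rintro ⟨hg1, hg2⟩ w' hw'
      rw [eval_eq w', eval_eq w, Prod.ext_iff] at hw'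
      have l1 := hg1 _ hw'.1
      have l2 := hg2 _ hw'.2
      have := length_eq w
      have := length_eq w'
      omega
  have key : {w : List (X₁ ⊕ X₂) | IsGeodesic ev w}
      = preL Sum.getLeft? {w : List X₁ | IsGeodesic e₁ w}
        ⊓ preL Sum.getRight? {w : List X₂ | IsGeodesic e₂ w} := by
    ext w
    rw [Set.mem_setOf_eq, geo_iff w]
    exact Iff.rfl
  rw [key]
  exact StarFree.inter _ _
    (sfPre _ (Set.toFinite _) (fun b => Set.toFinite _) h₁)
    (sfPre _ (Set.toFinite _) (fun b => Set.toFinite _) h₂)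
end
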